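/- arXiv:1509.09181 — 6 statements merged into one kernel-verified Lean document; each statement's English description precedes it below -/
import Mathlib

section
/- Let θ₊, θ₋ : ℕ → ℤ be sequences and define K₊, K₋ : ℕ → ℤ by K₊(N) = Σ_{g ∣ N, g odd} (N/g)·θ₊(N/g) and K₋(N) = Σ_{g ∣ N, g even} (N/g)·θ₊(N/g) + Σ_{g ∣ N} (N/g)·θ₋(N/g) for all N ≥ 1. Then for every N ≥ 1 one has N·θ₋(N) = Σ_{g ∣ N, g even} μ(g)·K₊(N/g) + Σ_{g ∣ N} μ(g)·K₋(N/g), where μ is the Möbius function. (Theorem 2.2, formula (2.8).) -/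
open Finset ArithmeticFunction
open scoped ArithmeticFunction.zeta

namespace FeynmanAux

/-- μ restricted to odd numbers. -/
def muOdd : ArithmeticFunction ℤ :=
  ⟨fun n => if Odd n then moebius n else 0, by simp⟩

/-- indicator of odd numbers. -/
def iotaOdd : ArithmeticFunction ℤ :=
  ⟨fun n => if Odd n then 1 else 0, by simp⟩

@[simp] lemma muOdd_apply (n : ℕ) : muOdd n = if Odd n then moebius n else 0 := rfl
@[simp] lemma iotaOdd_apply (n : ℕ) : iotaOdd n = if Odd n then 1 else 0 := rfl

lemma muOdd_mul_iotaOdd : muOdd * iotaOdd = 1 := by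
  ext n
  rw [ArithmeticFunction.mul_apply, ArithmeticFunction.one_apply]
  rcases Nat.even_or_odd n with he | ho
  · rcases eq_or_ne n 0 with rfl | hn
    · simp
    have hn1 : n ≠ 1 := by rintro rfl; simp at he
    rw [if_neg hn1]
    apply Finset.sum_eq_zero
    rintro ⟨a, b⟩ hab
    rw [Nat.mem_divisorsAntidiagonal] at hab
    simp only [muOdd_apply, iotaOdd_apply]
    by_cases ha : Odd a
    · have hb : ¬ Odd b := by
        intro hb
        have : Odd n := hab.1 ▸ (Nat.odd_mul.mpr ⟨ha, hb⟩)
        exact (Nat.not_even_iff_odd.mpr this) he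
      simp [hb]
    · simp [ha]
  · have hstep : ∑ p ∈ n.divisorsAntidiagonal, muOdd p.1 * iotaOdd p.2
        = ∑ p ∈ n.divisorsAntidiagonal,
            (moebius p.1 : ℤ) * ((ζ : ArithmeticFunction ℤ) p.2) := by
      apply Finset.sum_congr rfl
      rintro ⟨a, b⟩ hab
      rw [Nat.mem_divisorsAntidiagonal] at hab
      have ha : Odd a := (Nat.odd_mul.mp (hab.1 ▸ ho)).1
      have hb : Odd b := (Nat.odd_mul.mp (hab.1 ▸ ho)).2
      have hb0 : b ≠ 0 := by rintro rfl; simp at hb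
      simp [ha, hb, natCoe_apply, zeta_apply, hb0]
    rw [hstep, ← ArithmeticFunction.mul_apply, moebius_mul_coe_zeta,
      ArithmeticFunction.one_apply]

lemma conv_eq_sum_divisors (f g : ArithmeticFunction ℤ) (n : ℕ) :
    (f * g) n = ∑ d ∈ n.divisors, f d * g (n / d) := by
  rw [ArithmeticFunction.mul_apply, ← Nat.sum_divisorsAntidiagonal (fun a b => f a * g b)]

end FeynmanAux

open FeynmanAux

/-- Theorem 2.2, formula (2.8): inversion formula for the number of
equivalence classes of nonperiodic cycles of negative sign. -/
theorem feynman_theta_minus_inversion (θp θm Kp Km : ℕ → ℤ)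
    (hKp : ∀ N : ℕ, 1 ≤ N →
      Kp N = ∑ g ∈ N.divisors.filter (fun g => Odd g), ((N / g : ℕ) : ℤ) * θp (N / g))
    (hKm : ∀ N : ℕ, 1 ≤ N →
      Km N = ∑ g ∈ N.divisors.filter (fun g => Even g), ((N / g : ℕ) : ℤ) * θp (N / g)
        + ∑ g ∈ N.divisors, ((N / g : ℕ) : ℤ) * θm (N / g)) :
    ∀ N : ℕ, 1 ≤ N →
      (N : ℤ) * θm N =
        ∑ g ∈ N.divisors.filter (fun g => Even g), (moebius g : ℤ) * Kp (N / g)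
        + ∑ g ∈ N.divisors, (moebius g : ℤ) * Km (N / g) := by
  set fA : ArithmeticFunction ℤ := ⟨fun n => (n : ℤ) * θp n, by simp⟩ with hfA
  set mA : ArithmeticFunction ℤ := ⟨fun n => (n : ℤ) * θm n, by simp⟩ with hmA
  have hKp' : ∀ k : ℕ, k ≠ 0 → Kp k = (iotaOdd * fA) k := by
    intro k hk
    rw [hKp k (Nat.one_le_iff_ne_zero.mpr hk), conv_eq_sum_divisors, Finset.sum_filter]
    apply Finset.sum_congr rfl
    intro d _
    by_cases hdo : Odd d <;> simp [hdo, hfA]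
  have hKm' : ∀ k : ℕ, k ≠ 0 →
      Km k = (((ζ : ArithmeticFunction ℤ) * fA) k - (iotaOdd * fA) k)
        + ((ζ : ArithmeticFunction ℤ) * mA) k := by
    intro k hk
    rw [hKm k (Nat.one_le_iff_ne_zero.mpr hk)]
    congr 1
    · rw [conv_eq_sum_divisors, conv_eq_sum_divisors, ← Finset.sum_sub_distrib,
        Finset.sum_filter]
      apply Finset.sum_congr rfl
      intro d hd
      have hd0 : d ≠ 0 := (Nat.pos_of_mem_divisors hd).ne'
      rcases Nat.even_or_odd d with h | h
      · simp [h, Nat.not_odd_iff_even.mpr h, hfA, natCoe_apply, zeta_apply, hd0]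
      · simp [h, Nat.not_even_iff_odd.mpr h, hfA, natCoe_apply, zeta_apply, hd0]
    · rw [conv_eq_sum_divisors]
      apply Finset.sum_congr rfl
      intro d hd
      have hd0 : d ≠ 0 := (Nat.pos_of_mem_divisors hd).ne'
      simp [hmA, natCoe_apply, zeta_apply, hd0]
  intro N hN
  have hN0 : N ≠ 0 := by omega
  have hdiv0 : ∀ d ∈ N.divisors, N / d ≠ 0 := fun d hd =>
    (Nat.div_pos (Nat.le_of_dvd (Nat.pos_of_ne_zero hN0) (Nat.dvd_of_mem_divisors hd))
      (Nat.pos_of_mem_divisors hd)).ne'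
  have key1 : ∑ g ∈ N.divisors.filter (fun g => Even g), (moebius g : ℤ) * Kp (N / g)
      = ((moebius : ArithmeticFunction ℤ) * (iotaOdd * fA)) N
        - (muOdd * (iotaOdd * fA)) N := by
    rw [conv_eq_sum_divisors, conv_eq_sum_divisors, ← Finset.sum_sub_distrib,
      Finset.sum_filter]
    apply Finset.sum_congr rfl
    intro d hd
    rw [hKp' (N / d) (hdiv0 d hd)]
    rcases Nat.even_or_odd d with h | h
    · simp [h, Nat.not_odd_iff_even.mpr h]
    · simp [Nat.not_even_iff_odd.mpr h, h]
  have key2 : ∑ g ∈ N.divisors, (moebius g : ℤ) * Km (N / g)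
      = ((moebius : ArithmeticFunction ℤ) * ((ζ : ArithmeticFunction ℤ) * fA)) N
        - ((moebius : ArithmeticFunction ℤ) * (iotaOdd * fA)) N
        + ((moebius : ArithmeticFunction ℤ) * ((ζ : ArithmeticFunction ℤ) * mA)) N := by
    rw [conv_eq_sum_divisors, conv_eq_sum_divisors, conv_eq_sum_divisors,
      ← Finset.sum_sub_distrib, ← Finset.sum_add_distrib]
    apply Finset.sum_congr rfl
    intro d hd
    rw [hKm' (N / d) (hdiv0 d hd)]
    ring
  rw [key1, key2]
  have e1 : (muOdd * (iotaOdd * fA)) N = fA N := by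
    rw [← mul_assoc, muOdd_mul_iotaOdd, one_mul]
  have e2 : ((moebius : ArithmeticFunction ℤ) * ((ζ : ArithmeticFunction ℤ) * fA)) N
      = fA N := by
    rw [← mul_assoc, moebius_mul_coe_zeta, one_mul]
  have e3 : ((moebius : ArithmeticFunction ℤ) * ((ζ : ArithmeticFunction ℤ) * mA)) N
      = mA N := by
    rw [← mul_assoc, moebius_mul_coe_zeta, one_mul]
  rw [e1, e2, e3]
  show mA N = _
  ring
end

section
/- Let θ₊, θ₋ : ℕ → ℤ be sequences and define K₊, K₋ : ℕ → ℤ by K₊(N) = Σ_{g ∣ N, g odd} (N/g)·θ₊(N/g) and K₋(N) = Σ_{g ∣ N, g even} (N/g)·θ₊(N/g) + Σ_{g ∣ N} (N/g)·θ₋(N/g) for all N ≥ 1. Then for every N ≥ 1: if N is odd, Σ_{g ∣ N} μ(g)·(K₋(N/g) − K₊(N/g)) = N·(θ₋(N) − θ₊(N)); and if N is even, Σ_{g ∣ N} μ(g)·(K₋(N/g) − K₊(N/g)) = N·(θ₋(N) − θ₊(N) + θ₊(N/2)), where μ is the Möbius function. (Theorem 3.2: the exponent Ω(N) := (1/N)Σ_{g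 ∣ N} μ(g)(K₋ − K₊)(N/g) equals θ₋(N) − θ₊(N) for odd N and θ₋(N) − θ₊(N) + θ₊(N/2) for even N; in particular it is an integer.) -/
open Finset ArithmeticFunction

lemma even_div_sum (n : ℕ) (hn : Even n) (hn0 : n ≠ 0) (F : ℕ → ℤ) :
    ∑ d ∈ n.divisors.filter (fun d => Even d), F d = ∑ e ∈ (n / 2).divisors, F (2 * e) := by
  obtain ⟨m, hm⟩ := hn
  have hm2 : n = 2 * m := by omega
  subst hm2
  have hm0 : m ≠ 0 := by omega
  rw [Nat.mul_div_cancel_left _ (by norm_num)]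
  apply Finset.sum_nbij' (i := fun d => d / 2) (j := fun e => 2 * e)
  · intro d hd
    simp only [mem_filter, Nat.mem_divisors] at hd
    obtain ⟨⟨hdvd, _⟩, k, hk⟩ := hd
    have hd2 : d = 2 * k := by omega
    subst hd2
    rw [Nat.mul_div_cancel_left _ (by norm_num)]
    exact Nat.mem_divisors.2 ⟨(mul_dvd_mul_iff_left (by norm_num : (2:ℕ) ≠ 0)).1 hdvd, hm0⟩
  · intro e he
    rw [Nat.mem_divisors] at he
    simp only [mem_filter, Nat.mem_divisors]
    exact ⟨⟨mul_dvd_mul_left 2 he.1, by positivity⟩, ⟨e, by ring⟩⟩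
  · intro d hd
    simp only [mem_filter] at hd
    obtain ⟨_, k, hk⟩ := hd
    omega
  · intro e he
    omega
  · intro d hd
    simp only [mem_filter] at hd
    obtain ⟨_, k, hk⟩ := hd
    congr 1
    omega

lemma odd_no_even_div (n : ℕ) (hn : ¬ Even n) :
    n.divisors.filter (fun d => Even d) = ∅ := by
  ext d
  simp only [mem_filter, Nat.mem_divisors, Finset.notMem_empty, iff_false]
  rintro ⟨⟨hdvd, _⟩, hde⟩
  exact hn (even_iff_two_dvd.2 (hde.two_dvd.trans hdvd))

/-- Theorem 3.2: the exponent `Ω(N) = (1/N) Σ_{g∣N} μ(g)(K₋−K₊)(N/g)`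
equals `θ₋(N) − θ₊(N)` for odd `N` and `θ₋(N) − θ₊(N) + θ₊(N/2)` for even `N`. -/
theorem feynman_Omega_eq (θp θm Kp Km : ℕ → ℤ)
    (hKp : ∀ N : ℕ, 1 ≤ N →
      Kp N = ∑ g ∈ N.divisors.filter (fun g => Odd g), ((N / g : ℕ) : ℤ) * θp (N / g))
    (hKm : ∀ N : ℕ, 1 ≤ N →
      Km N = ∑ g ∈ N.divisors.filter (fun g => Even g), ((N / g : ℕ) : ℤ) * θp (N / g)
        + ∑ g ∈ N.divisors, ((N / g : ℕ) : ℤ) * θm (N / g)) :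
    ∀ N : ℕ, 1 ≤ N →
      (Odd N →
        ∑ g ∈ N.divisors, (moebius g : ℤ) * (Km (N / g) - Kp (N / g))
          = (N : ℤ) * (θm N - θp N))
      ∧ (Even N →
        ∑ g ∈ N.divisors, (moebius g : ℤ) * (Km (N / g) - Kp (N / g))
          = (N : ℤ) * (θm N - θp N + θp (N / 2))) := by
  set H : ℕ → ℤ := fun d =>
    (d : ℤ) * (θm d - θp d) + (if Even d then (d : ℤ) * θp (d / 2) else 0) with hH
  have key : ∀ n > 0, ∑ d ∈ n.divisors, H d = Km n - Kp n := by
    intro n hn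
    rw [hKm n hn, hKp n hn]
    have hsplit : n.divisors.filter (fun g => Odd g)
        = n.divisors \ n.divisors.filter (fun g => Even g) := by
      ext g
      simp only [mem_filter, mem_sdiff, not_and, Nat.not_even_iff_odd]
      tauto
    rw [hsplit, Finset.sum_sdiff_eq_sub (Finset.filter_subset _ _)]
    have hθm : ∑ g ∈ n.divisors, ((n / g : ℕ) : ℤ) * θm (n / g)
        = ∑ d ∈ n.divisors, (d : ℤ) * θm d :=
      Nat.sum_div_divisors n (fun d => (d : ℤ) * θm d)
    have hθp : ∑ g ∈ n.divisors, ((n / g : ℕ) : ℤ) * θp (n / g)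
        = ∑ d ∈ n.divisors, (d : ℤ) * θp d :=
      Nat.sum_div_divisors n (fun d => (d : ℤ) * θp d)
    have hHsplit : ∑ d ∈ n.divisors, H d
        = ∑ d ∈ n.divisors, (d : ℤ) * (θm d - θp d)
          + ∑ d ∈ n.divisors.filter (fun d => Even d), (d : ℤ) * θp (d / 2) := by
      rw [hH, Finset.sum_add_distrib, ← Finset.sum_filter]
    rw [hHsplit, hθm, hθp]
    have hkey2 : ∑ d ∈ n.divisors.filter (fun d => Even d), (d : ℤ) * θp (d / 2)
        = 2 * ∑ g ∈ n.divisors.filter (fun g => Even g), ((n / g : ℕ) : ℤ) * θp (n / g) := by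
      by_cases hne : Even n
      · rw [even_div_sum n hne (by omega) (fun d => (d : ℤ) * θp (d / 2)),
          even_div_sum n hne (by omega) (fun g => ((n / g : ℕ) : ℤ) * θp (n / g))]
        have hquot : ∀ e ∈ (n / 2).divisors,
            ((n / (2 * e) : ℕ) : ℤ) * θp (n / (2 * e))
              = ((n / 2 / e : ℕ) : ℤ) * θp (n / 2 / e) := by
          intro e he
          rw [Nat.div_div_eq_div_mul]
        rw [Finset.sum_congr rfl hquot,
          Nat.sum_div_divisors (n / 2) (fun d => (d : ℤ) * θp d), Finset.mul_sum]
        apply Finset.sum_congr rfl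
        intro e he
        have : (2 * e) / 2 = e := by omega
        rw [this]
        push_cast
        ring
      · rw [odd_no_even_div n hne]
        simp
    rw [hkey2]
    have : ∑ d ∈ n.divisors, (d : ℤ) * (θm d - θp d)
        = ∑ d ∈ n.divisors, (d : ℤ) * θm d - ∑ d ∈ n.divisors, (d : ℤ) * θp d := by
      rw [← Finset.sum_sub_distrib]
      apply Finset.sum_congr rfl
      intro d _
      ring
    rw [this]
    ring
  have inv := ArithmeticFunction.sum_eq_iff_sum_smul_moebius_eq
    (f := H) (g := fun n => Km n - Kp n) |>.mp key
  intro N hN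
  have hinv := inv N (by omega)
  have hsum : ∑ g ∈ N.divisors, (moebius g : ℤ) * (Km (N / g) - Kp (N / g)) = H N := by
    rw [← hinv,
      ← Nat.sum_divisorsAntidiagonal (f := fun g d => (moebius g : ℤ) * (Km d - Kp d))]
    simp [smul_eq_mul]
  constructor
  · intro hodd
    rw [hsum, hH]
    simp only [Nat.not_even_iff_odd.2 hodd, if_false, add_zero]
  · intro heven
    rw [hsum, hH]
    simp only [heven, if_true]
    ring
end

section
/- Let θ₊, θ₋ : ℕ → ℤ be sequences and define K₊, K₋ : ℕ → ℤ by K₊(N) = Σ_{g ∣ N, g odd} (N/g)·θ₊(N/g) and K₋(N) = Σ_{g ∣ N, g even} (N/g)·θ₊(N/g) + Σ_{g ∣ N} (N/g)·θ₋(N/g) for all N ≥ 1. Then in the formal power series ring ℚ⟦X⟧ the identity ∏_{N≥1} (1+X^N)^{θ₊(N)} · (1−X^N)^{θ₋(N)} = exp( Σ_{N≥1} (K₊(N) − K₋(N))/N · X^N ) holds coefficientwise; that is, for every n ≥ 0 the coefficient of X^n in the finite product ∏_{N=1}^{n} (1+X^N)^{θ₊(N)} (1−X^N)^{θ₋(N)}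 equals the coefficient of X^n in exp( Σ_{N≥1} (K₊(N) − K₋(N))/N · X^N ). (The main computation in the proof of Theorem 3.1: the Feynman-identity product equals e^{−g(z)} with g(z) = Σ_N Tr S^N/N z^N = Σ_N (K₋(N)−K₊(N))/N z^N.) -/
open Finset PowerSeries

/-- Integer power of a formal power series: for a unit `f`, `fzpow f k` is `f^k` for
`k ≥ 0` and the inverse of `f^{-k}` for `k < 0` (via `Ring.inverse`). -/
noncomputable def fzpow (f : PowerSeries ℚ) (k : ℤ) : PowerSeries ℚ :=
  if 0 ≤ k then f ^ k.toNat else Ring.inverse (f ^ (-k).toNat)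

/-- The formal exponential `exp(f) = Σ_{k≥0} f^k/k!` of a power series `f` with zero
constant term: its `n`-th coefficient is `Σ_{k=0}^{n} coeff n (f^k)/k!` (terms with
`k > n` vanish since `f^k` has order `> n`). -/
noncomputable def formalExp (f : PowerSeries ℚ) : PowerSeries ℚ :=
  PowerSeries.mk fun n =>
    ∑ k ∈ Finset.range (n + 1), PowerSeries.coeff n (f ^ k) / (Nat.factorial k : ℚ)

noncomputable def Lg (ε : ℚ) (N : ℕ) : PowerSeries ℚ :=
  PowerSeries.mk fun k => if N ∣ k ∧ k ≠ 0 then -ε ^ (k / N) / ((k / N : ℕ) : ℚ) else 0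

noncomputable def Dg (ε : ℚ) (N : ℕ) : PowerSeries ℚ :=
  PowerSeries.mk fun k => if N ∣ (k + 1) then -(N : ℚ) * ε ^ ((k + 1) / N) else 0

lemma derivative_Lg (ε : ℚ) (N : ℕ) (hN : 1 ≤ N) : d⁄dX ℚ (Lg ε N) = Dg ε N := by
  ext k
  rw [coeff_derivative]
  simp only [Lg, Dg, coeff_mk]
  by_cases h : N ∣ (k + 1)
  · obtain ⟨m, hm⟩ := h
    have hm1 : 1 ≤ m := Nat.pos_of_ne_zero (by rintro rfl; omega)
    have hdvd : N ∣ k + 1 := ⟨m, hm⟩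
    have hdiv : (k + 1) / N = m := by
      rw [hm, Nat.mul_div_cancel_left _ (by omega : 0 < N)]
    simp only [hdvd, hdiv, if_pos, Nat.succ_ne_zero, ne_eq, not_false_iff, and_true, if_true]
    have hkq : ((k : ℚ) + 1) = (N : ℚ) * m := by
      have : ((k + 1 : ℕ) : ℚ) = ((N * m : ℕ) : ℚ) := by rw [hm]
      push_cast at this
      linarith
    have hm0 : (m : ℚ) ≠ 0 := by positivity
    field_simp
    rw [hkq]
    ring
  · have h2 : ¬(N ∣ k + 1 ∧ k + 1 ≠ 0) := by tauto
    simp [h, h2]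

lemma unit_mul_Dg (ε : ℚ) (N : ℕ) (hN : 1 ≤ N) :
    (1 - PowerSeries.C ε * X ^ N) * Dg ε N = PowerSeries.C (-ε * N) * X ^ (N - 1) := by
  ext k
  rw [sub_mul, one_mul, map_sub, mul_assoc, coeff_C_mul, coeff_X_pow_mul', coeff_C_mul,
    coeff_X_pow]
  simp only [Dg, coeff_mk]
  by_cases h1 : N ∣ (k + 1)
  · obtain ⟨m, hm⟩ := h1
    have h1 : N ∣ (k + 1) := ⟨m, hm⟩
    have hm1 : 1 ≤ m := Nat.pos_of_ne_zero (by rintro rfl; omega)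
    have hd1 : (k + 1) / N = m := by rw [hm, Nat.mul_div_cancel_left _ (by omega : 0 < N)]
    have hsub : N * (m - 1) + N = N * m := by
      have h' : m - 1 + 1 = m := by omega
      calc N * (m - 1) + N = N * ((m - 1) + 1) := by ring
        _ = N * m := by rw [h']
    by_cases h2 : N ≤ k
    · have hm2 : 2 ≤ m := by
        by_contra hc
        have hm1' : m = 1 := by omega
        rw [hm1', mul_one] at hm
        omega
      have h3 : N ∣ k - N + 1 := ⟨m - 1, by omega⟩
      have h4 : k ≠ N - 1 := by omega
      have hd2 : (k - N + 1) / N = m - 1 := by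
        rw [(by omega : k - N + 1 = N * (m - 1)), Nat.mul_div_cancel_left _ (by omega : 0 < N)]
      rw [if_pos h1, if_pos h2, if_pos h3, if_neg h4, hd1, hd2]
      obtain ⟨p, rfl⟩ : ∃ p, m = p + 1 := ⟨m - 1, by omega⟩
      simp only [Nat.add_sub_cancel]
      rw [pow_succ]
      ring
    · have hkN : k + 1 = N := by
        have := Nat.le_of_dvd (by omega) h1
        omega
      have h4 : k = N - 1 := by omega
      have hm1' : m = 1 := by
        rw [← hkN] at hm
        nlinarith
      rw [if_pos h1, if_neg h2, if_pos h4, hd1, hm1', pow_one]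
      ring
  · have h4 : k ≠ N - 1 := by
      rintro rfl
      exact h1 ⟨1, by omega⟩
    by_cases h2 : N ≤ k
    · have h3 : ¬ N ∣ k - N + 1 := by
        rintro ⟨c, hc⟩
        apply h1
        refine ⟨c + 1, ?_⟩
        have : N * (c + 1) = N * c + N := by ring
        omega
      rw [if_neg h1, if_pos h2, if_neg h3, if_neg h4]
      ring
    · rw [if_neg h1, if_neg h2, if_neg h4]
      ring

lemma isUnit_of_constantCoeff_one {u : PowerSeries ℚ} (hu : constantCoeff u = 1) :
    IsUnit u := by
  rw [PowerSeries.isUnit_iff_constantCoeff, hu]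
  exact isUnit_one

lemma constantCoeff_fzpow {u : PowerSeries ℚ} (hu : constantCoeff u = 1) (k : ℤ) :
    constantCoeff (fzpow u k) = 1 := by
  unfold fzpow
  split_ifs with h
  · rw [map_pow, hu, one_pow]
  · have hU : IsUnit (u ^ (-k).toNat) := (isUnit_of_constantCoeff_one hu).pow _
    have h1 : u ^ (-k).toNat * Ring.inverse (u ^ (-k).toNat) = 1 :=
      Ring.mul_inverse_cancel _ hU
    have := congrArg (constantCoeff) h1
    rw [map_mul, map_one, map_pow, hu, one_pow, one_mul] at this
    exact this

lemma derivative_pow_ps (u : PowerSeries ℚ) (a : ℕ) :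
    d⁄dX ℚ (u ^ a) = (a : PowerSeries ℚ) * u ^ (a - 1) * d⁄dX ℚ u := by
  rw [Derivation.leibniz_pow, smul_eq_mul, nsmul_eq_mul, mul_assoc]

lemma u_mul_derivative_fzpow {u : PowerSeries ℚ} (hu : constantCoeff u = 1) (k : ℤ) :
    u * d⁄dX ℚ (fzpow u k) = PowerSeries.C (k : ℚ) * (d⁄dX ℚ u * fzpow u k) := by
  unfold fzpow
  split_ifs with h
  · -- nonneg case
    rcases Nat.eq_zero_or_pos k.toNat with h0 | h0
    · have hk0 : k = 0 := by omega
      subst hk0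
      simp [derivative_pow_ps]
    · rw [derivative_pow_ps]
      have hC : PowerSeries.C (k : ℚ) = (k.toNat : PowerSeries ℚ) := by
        have : ((k.toNat : ℤ) : ℚ) = (k : ℚ) := by
          norm_cast
          omega
        rw [← this]
        push_cast
        simp
      rw [hC]
      have hpow : u * u ^ (k.toNat - 1) = u ^ k.toNat := by
        conv_rhs => rw [(by omega : k.toNat = (k.toNat - 1) + 1), pow_succ]
        ring
      calc u * ((k.toNat : PowerSeries ℚ) * u ^ (k.toNat - 1) * d⁄dX ℚ u)
          = (k.toNat : PowerSeries ℚ) * (d⁄dX ℚ u * (u * u ^ (k.toNat - 1))) := by ring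
        _ = _ := by rw [hpow]
  · -- neg case
    have hk : 1 ≤ (-k).toNat := by omega
    set a := (-k).toNat with ha
    have hU : IsUnit (u ^ a) := (isUnit_of_constantCoeff_one hu).pow _
    set w := Ring.inverse (u ^ a) with hw
    have h1 : w * u ^ a = 1 := Ring.inverse_mul_cancel _ hU
    have h2 : d⁄dX ℚ w * u ^ a + w * d⁄dX ℚ (u ^ a) = 0 := by
      have := congrArg (d⁄dX ℚ) h1
      rw [Derivation.leibniz, Derivation.map_one_eq_zero, smul_eq_mul, smul_eq_mul] at this
      linear_combination this
    have hune : u ≠ 0 := by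
      intro h0
      rw [h0] at hu
      simp at hu
    have h2' : d⁄dX ℚ w * u ^ a + w * ((a : PowerSeries ℚ) * u ^ (a - 1) * d⁄dX ℚ u) = 0 := by
      rw [← derivative_pow_ps]
      exact h2
    have hpow : u ^ (a - 1) * u = u ^ a := by
      conv_rhs => rw [(by omega : a = (a - 1) + 1), pow_succ]
    have hC : PowerSeries.C (k : ℚ) = -(a : PowerSeries ℚ) := by
      have hka : (k : ℚ) = -(a : ℚ) := by
        have h' : (a : ℤ) = -k := by omega
        have h'' : ((a : ℤ) : ℚ) = ((-k : ℤ) : ℚ) := by rw [h']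
        push_cast at h''
        linarith
      rw [hka]
      simp
    apply mul_left_cancel₀ (pow_ne_zero a hune)
    rw [hC]
    linear_combination u * h2' - ((a : PowerSeries ℚ) * w * d⁄dX ℚ u) * hpow

lemma constantCoeff_one_add_X_pow (N : ℕ) (hN : 1 ≤ N) :
    constantCoeff (1 + X ^ N : PowerSeries ℚ) = 1 := by
  rw [map_add, map_one, map_pow, constantCoeff_X, zero_pow (by omega), add_zero]

lemma constantCoeff_one_sub_X_pow (N : ℕ) (hN : 1 ≤ N) :
    constantCoeff (1 - X ^ N : PowerSeries ℚ) = 1 := by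
  rw [map_sub, map_one, map_pow, constantCoeff_X, zero_pow (by omega), sub_zero]

lemma one_add_eq (N : ℕ) : (1 + X ^ N : PowerSeries ℚ) = 1 - PowerSeries.C (-1) * X ^ N := by
  simp

lemma one_sub_eq (N : ℕ) : (1 - X ^ N : PowerSeries ℚ) = 1 - PowerSeries.C 1 * X ^ N := by
  simp

lemma derivative_one_sub_C_mul (ε : ℚ) (N : ℕ) :
    d⁄dX ℚ (1 - PowerSeries.C ε * X ^ N) = PowerSeries.C (-ε * N) * X ^ (N - 1) := by
  rw [map_sub, Derivation.map_one_eq_zero, Derivation.leibniz, derivative_pow_ps,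
    derivative_C, PowerSeries.derivative_X, smul_eq_mul, smul_eq_mul]
  have hC : PowerSeries.C (-ε * N) = -(PowerSeries.C ε) * (N : PowerSeries ℚ) := by
    rw [map_mul, map_neg, map_natCast]
  rw [hC]
  ring

lemma unit_mul_Dg' (ε : ℚ) (N : ℕ) (hN : 1 ≤ N) :
    (1 - PowerSeries.C ε * X ^ N) * Dg ε N = d⁄dX ℚ (1 - PowerSeries.C ε * X ^ N) := by
  rw [unit_mul_Dg ε N hN, derivative_one_sub_C_mul]

lemma derivative_factor (θp θm : ℕ → ℤ) (N : ℕ) (hN : 1 ≤ N) :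
    d⁄dX ℚ (fzpow (1 + X ^ N) (θp N) * fzpow (1 - X ^ N) (θm N)) =
      (PowerSeries.C ((θp N : ℤ) : ℚ) * Dg (-1) N + PowerSeries.C ((θm N : ℤ) : ℚ) * Dg 1 N) *
        (fzpow (1 + X ^ N) (θp N) * fzpow (1 - X ^ N) (θm N)) := by
  set u : PowerSeries ℚ := 1 + X ^ N with hu_def
  set v : PowerSeries ℚ := 1 - X ^ N with hv_def
  have hu0 : constantCoeff u = 1 := constantCoeff_one_add_X_pow N hN
  have hv0 : constantCoeff v = 1 := constantCoeff_one_sub_X_pow N hN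
  have hune : u ≠ 0 := by intro h0; rw [h0] at hu0; simp at hu0
  have hvne : v ≠ 0 := by intro h0; rw [h0] at hv0; simp at hv0
  have hDu : u * Dg (-1) N = d⁄dX ℚ u := by
    rw [hu_def, one_add_eq]
    exact unit_mul_Dg' (-1) N hN
  have hDv : v * Dg 1 N = d⁄dX ℚ v := by
    rw [hv_def, one_sub_eq]
    exact unit_mul_Dg' 1 N hN
  have hFu := u_mul_derivative_fzpow hu0 (θp N)
  have hFv := u_mul_derivative_fzpow hv0 (θm N)
  rw [Derivation.leibniz, smul_eq_mul, smul_eq_mul]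
  apply mul_left_cancel₀ (mul_ne_zero hune hvne)
  linear_combination (u * fzpow u (θp N)) * hFv + (v * fzpow v (θm N)) * hFu
    - (PowerSeries.C ((θm N : ℤ) : ℚ) * u * fzpow u (θp N) * fzpow v (θm N)) * hDv
    - (PowerSeries.C ((θp N : ℤ) : ℚ) * v * fzpow u (θp N) * fzpow v (θm N)) * hDu

-- ODE uniqueness
lemma ode_unique (a F G : PowerSeries ℚ) (hF : d⁄dX ℚ F = a * F) (hG : d⁄dX ℚ G = a * G)
    (h0 : PowerSeries.coeff 0 F = PowerSeries.coeff 0 G) : F = G := by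
  ext n
  induction n using Nat.strong_induction_on with
  | _ n ih =>
    match n with
    | 0 => exact h0
    | Nat.succ n =>
      have hF' := congrArg (PowerSeries.coeff n) hF
      have hG' := congrArg (PowerSeries.coeff n) hG
      rw [PowerSeries.coeff_derivative, PowerSeries.coeff_mul] at hF' hG'
      have hsum : ∑ p ∈ antidiagonal n, coeff p.1 a * coeff p.2 F
          = ∑ p ∈ antidiagonal n, coeff p.1 a * coeff p.2 G := by
        apply Finset.sum_congr rfl
        intro p hp
        have hle : p.2 ≤ n := Finset.HasAntidiagonal.antidiagonal.snd_le hp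
        rw [ih p.2 (by omega)]
      have : coeff (n + 1) F * ((n : ℚ) + 1) = coeff (n + 1) G * ((n : ℚ) + 1) := by
        rw [hF', hG', hsum]
      have hne : ((n : ℚ) + 1) ≠ 0 := by positivity
      exact mul_right_cancel₀ hne this

-- coeff of pow vanishes below order
lemma coeff_pow_eq_zero {f : PowerSeries ℚ} (hf : constantCoeff f = 0) {m k : ℕ} (h : m < k) :
    PowerSeries.coeff m (f ^ k) = 0 := by
  obtain ⟨g, hg⟩ := PowerSeries.X_dvd_iff.mpr hf
  rw [hg, mul_pow, PowerSeries.coeff_X_pow_mul']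
  rw [if_neg (by omega)]

lemma coeff_zero_formalExp (f : PowerSeries ℚ) : PowerSeries.coeff 0 (formalExp f) = 1 := by
  simp [formalExp]

lemma coeff_formalExp_eq_coeff_partial (f : PowerSeries ℚ) (hf : constantCoeff f = 0)
    (M m : ℕ) (hm : m ≤ M) :
    PowerSeries.coeff m (formalExp f)
      = PowerSeries.coeff m (∑ k ∈ Finset.range (M + 1),
          PowerSeries.C ((k.factorial : ℚ)⁻¹) * f ^ k) := by
  rw [map_sum]
  simp only [PowerSeries.coeff_C_mul, formalExp, PowerSeries.coeff_mk]
  rw [Finset.sum_subset (Finset.range_subset_range.mpr (by omega : m + 1 ≤ M + 1))]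
  · apply Finset.sum_congr rfl
    intro k _
    rw [div_eq_inv_mul]
  · intro k _ hk
    have hmk : m < k := by
      simp only [Finset.mem_range, not_lt] at hk
      omega
    rw [coeff_pow_eq_zero hf hmk, zero_div]


lemma derivative_C_mul (a : ℚ) (h : PowerSeries ℚ) :
    d⁄dX ℚ (PowerSeries.C a * h) = PowerSeries.C a * d⁄dX ℚ h := by
  rw [Derivation.leibniz, smul_eq_mul, smul_eq_mul, PowerSeries.derivative_C, mul_zero, add_zero]

lemma derivative_formalExp (f : PowerSeries ℚ) (hf : constantCoeff f = 0) :
    d⁄dX ℚ (formalExp f) = d⁄dX ℚ f * formalExp f := by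
  ext n
  set T : PowerSeries ℚ := ∑ k ∈ Finset.range (n + 2),
    PowerSeries.C ((k.factorial : ℚ)⁻¹) * f ^ k with hT
  set T' : PowerSeries ℚ := ∑ k ∈ Finset.range (n + 1),
    PowerSeries.C ((k.factorial : ℚ)⁻¹) * f ^ k with hT'
  have hdT : d⁄dX ℚ T = d⁄dX ℚ f * T' := by
    rw [hT, map_sum]
    have hstep : ∀ k ∈ Finset.range (n + 2),
        d⁄dX ℚ (PowerSeries.C ((k.factorial : ℚ)⁻¹) * f ^ k)
          = PowerSeries.C ((k.factorial : ℚ)⁻¹) * ((k : PowerSeries ℚ) * f ^ (k - 1) * d⁄dX ℚ f) := by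
      intro k _
      rw [derivative_C_mul, derivative_pow_ps]
    rw [Finset.sum_congr rfl hstep]
    rw [Finset.sum_range_succ' (fun k => PowerSeries.C ((k.factorial : ℚ)⁻¹)
      * ((k : PowerSeries ℚ) * f ^ (k - 1) * d⁄dX ℚ f)) (n + 1)]
    simp only [Nat.cast_zero, zero_mul, mul_zero, add_zero, Nat.add_sub_cancel]
    rw [hT', Finset.mul_sum]
    apply Finset.sum_congr rfl
    intro j _
    have h1 : (j.factorial : ℚ) ≠ 0 := by exact_mod_cast j.factorial_ne_zero
    have hfacC : PowerSeries.C (((j + 1).factorial : ℚ)⁻¹) * ((j + 1 : ℕ) : PowerSeries ℚ)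
        = PowerSeries.C ((j.factorial : ℚ)⁻¹) := by
      rw [show ((j + 1 : ℕ) : PowerSeries ℚ) = PowerSeries.C ((j + 1 : ℕ) : ℚ) by
        rw [map_natCast], ← map_mul]
      congr 1
      rw [Nat.factorial_succ]
      field_simp
      norm_cast
    calc PowerSeries.C (((j + 1).factorial : ℚ)⁻¹) * (((j + 1 : ℕ)) * f ^ j * d⁄dX ℚ f)
        = (PowerSeries.C (((j + 1).factorial : ℚ)⁻¹) * ((j + 1 : ℕ) : PowerSeries ℚ))
            * (f ^ j * d⁄dX ℚ f) := by push_cast; ring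
      _ = PowerSeries.C ((j.factorial : ℚ)⁻¹) * (f ^ j * d⁄dX ℚ f) := by rw [hfacC]
      _ = d⁄dX ℚ f * (PowerSeries.C ((j.factorial : ℚ)⁻¹) * f ^ j) := by ring
  rw [PowerSeries.coeff_derivative,
    coeff_formalExp_eq_coeff_partial f hf (n + 1) (n + 1) le_rfl, ← hT,
    ← PowerSeries.coeff_derivative, hdT, PowerSeries.coeff_mul, PowerSeries.coeff_mul]
  apply Finset.sum_congr rfl
  intro p hp
  have hle : p.2 ≤ n := Finset.HasAntidiagonal.antidiagonal.snd_le hp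
  rw [← coeff_formalExp_eq_coeff_partial f hf n p.2 hle]

lemma coeff_pow_congr {f g : PowerSeries ℚ} {n : ℕ}
    (h : ∀ j ≤ n, PowerSeries.coeff j f = PowerSeries.coeff j g) (k : ℕ) :
    ∀ m ≤ n, PowerSeries.coeff m (f ^ k) = PowerSeries.coeff m (g ^ k) := by
  induction k with
  | zero => intro m _; rfl
  | succ k ih =>
    intro m hm
    rw [pow_succ, pow_succ, PowerSeries.coeff_mul, PowerSeries.coeff_mul]
    apply Finset.sum_congr rfl
    intro p hp
    have h1 : p.1 ≤ m := Finset.HasAntidiagonal.antidiagonal.fst_le hp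
    have h2 : p.2 ≤ m := Finset.HasAntidiagonal.antidiagonal.snd_le hp
    rw [ih p.1 (by omega), h p.2 (by omega)]

lemma coeff_formalExp_congr {f g : PowerSeries ℚ} {n : ℕ}
    (h : ∀ j ≤ n, PowerSeries.coeff j f = PowerSeries.coeff j g) :
    PowerSeries.coeff n (formalExp f) = PowerSeries.coeff n (formalExp g) := by
  simp only [formalExp, PowerSeries.coeff_mk]
  apply Finset.sum_congr rfl
  intro k _
  rw [coeff_pow_congr h k n le_rfl]

lemma derivative_prod_Icc (θp θm : ℕ → ℤ) (M : ℕ) :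
    d⁄dX ℚ (∏ N ∈ Finset.Icc 1 M, fzpow (1 + X ^ N) (θp N) * fzpow (1 - X ^ N) (θm N))
      = (∑ N ∈ Finset.Icc 1 M, (PowerSeries.C ((θp N : ℤ) : ℚ) * Dg (-1) N
          + PowerSeries.C ((θm N : ℤ) : ℚ) * Dg 1 N)) *
        ∏ N ∈ Finset.Icc 1 M, fzpow (1 + X ^ N) (θp N) * fzpow (1 - X ^ N) (θm N) := by
  induction M with
  | zero => simp
  | succ M ih =>
    rw [Finset.prod_Icc_succ_top (by omega : 1 ≤ M + 1),
      Finset.sum_Icc_succ_top (by omega : 1 ≤ M + 1),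
      Derivation.leibniz, smul_eq_mul, smul_eq_mul, ih,
      derivative_factor θp θm (M + 1) (by omega)]
    ring

lemma derivative_A (θp θm : ℕ → ℤ) (M : ℕ) :
    d⁄dX ℚ (∑ N ∈ Finset.Icc 1 M, (PowerSeries.C ((θp N : ℤ) : ℚ) * Lg (-1) N
        + PowerSeries.C ((θm N : ℤ) : ℚ) * Lg 1 N))
      = ∑ N ∈ Finset.Icc 1 M, (PowerSeries.C ((θp N : ℤ) : ℚ) * Dg (-1) N
          + PowerSeries.C ((θm N : ℤ) : ℚ) * Dg 1 N) := by
  rw [map_sum]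
  apply Finset.sum_congr rfl
  intro N hN
  have h1 : 1 ≤ N := (Finset.mem_Icc.mp hN).1
  rw [map_add, derivative_C_mul, derivative_C_mul, derivative_Lg _ _ h1, derivative_Lg _ _ h1]

lemma coeff_zero_Lg (ε : ℚ) (N : ℕ) : PowerSeries.coeff 0 (Lg ε N) = 0 := by
  simp [Lg]

lemma constantCoeff_A (θp θm : ℕ → ℤ) (M : ℕ) :
    constantCoeff (∑ N ∈ Finset.Icc 1 M, (PowerSeries.C ((θp N : ℤ) : ℚ) * Lg (-1) N
        + PowerSeries.C ((θm N : ℤ) : ℚ) * Lg 1 N)) = 0 := by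
  rw [← PowerSeries.coeff_zero_eq_constantCoeff, map_sum]
  apply Finset.sum_eq_zero
  intro N _
  rw [map_add, PowerSeries.coeff_C_mul, PowerSeries.coeff_C_mul, coeff_zero_Lg, coeff_zero_Lg]
  ring

lemma coeff_A_eq (θp θm Kp Km : ℕ → ℤ)
    (hKp : ∀ N : ℕ, 1 ≤ N →
      Kp N = ∑ g ∈ N.divisors.filter (fun g => Odd g), ((N / g : ℕ) : ℤ) * θp (N / g))
    (hKm : ∀ N : ℕ, 1 ≤ N →
      Km N = ∑ g ∈ N.divisors.filter (fun g => Even g), ((N / g : ℕ) : ℤ) * θp (N / g)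
        + ∑ g ∈ N.divisors, ((N / g : ℕ) : ℤ) * θm (N / g))
    (n j : ℕ) (hj1 : 1 ≤ j) (hjn : j ≤ n) :
    PowerSeries.coeff j (∑ N ∈ Finset.Icc 1 n, (PowerSeries.C ((θp N : ℤ) : ℚ) * Lg (-1) N
        + PowerSeries.C ((θm N : ℤ) : ℚ) * Lg 1 N))
      = ((Kp j - Km j : ℤ) : ℚ) / (j : ℚ) := by
  have hj0 : j ≠ 0 := by omega
  -- the coefficient of each summand
  rw [map_sum]
  have hcoeff : ∀ N ∈ Finset.Icc 1 n,
      PowerSeries.coeff j (PowerSeries.C ((θp N : ℤ) : ℚ) * Lg (-1) N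
        + PowerSeries.C ((θm N : ℤ) : ℚ) * Lg 1 N)
      = (if N ∣ j then ((θp N : ℤ) : ℚ) * (-(-1 : ℚ) ^ (j / N) / ((j / N : ℕ) : ℚ))
          + ((θm N : ℤ) : ℚ) * (-1 / ((j / N : ℕ) : ℚ)) else 0) := by
    intro N _
    rw [map_add, PowerSeries.coeff_C_mul, PowerSeries.coeff_C_mul]
    simp only [Lg, PowerSeries.coeff_mk]
    by_cases h : N ∣ j
    · rw [if_pos ⟨h, hj0⟩, if_pos ⟨h, hj0⟩, if_pos h, one_pow]
    · rw [if_neg (by tauto), if_neg (by tauto), if_neg h]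
      ring
  rw [Finset.sum_congr rfl hcoeff]
  -- restrict sum to divisors
  have hsub : j.divisors ⊆ Finset.Icc 1 n := by
    intro N hN
    rw [Nat.mem_divisors] at hN
    have h1 : 1 ≤ N := Nat.pos_of_ne_zero (by rintro rfl; exact hj0 (Nat.eq_zero_of_zero_dvd hN.1))
    have h2 : N ≤ j := Nat.le_of_dvd (by omega) hN.1
    rw [Finset.mem_Icc]
    omega
  rw [← Finset.sum_subset hsub (by
    intro N _ hNd
    rw [if_neg]
    intro hdvd
    exact hNd (Nat.mem_divisors.mpr ⟨hdvd, hj0⟩))]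
  have hstep2 : ∀ N ∈ j.divisors,
      (if N ∣ j then ((θp N : ℤ) : ℚ) * (-(-1 : ℚ) ^ (j / N) / ((j / N : ℕ) : ℚ))
          + ((θm N : ℤ) : ℚ) * (-1 / ((j / N : ℕ) : ℚ)) else 0)
      = ((if Odd (j / N) then (1 : ℚ) else -1) * (N : ℚ) * ((θp N : ℤ) : ℚ)
          - (N : ℚ) * ((θm N : ℤ) : ℚ)) / (j : ℚ) := by
    intro N hN
    rw [Nat.mem_divisors] at hN
    rw [if_pos hN.1]
    have hq : N * (j / N) = j := Nat.mul_div_cancel' hN.1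
    have hq1 : 1 ≤ j / N := Nat.pos_of_ne_zero (by intro h0; rw [h0, mul_zero] at hq; omega)
    have hqQ : ((j : ℚ)) = (N : ℚ) * ((j / N : ℕ) : ℚ) := by exact_mod_cast hq.symm
    have hqne : ((j / N : ℕ) : ℚ) ≠ 0 := by positivity
    have hjne : (j : ℚ) ≠ 0 := by positivity
    by_cases hodd : Odd (j / N)
    · rw [if_pos hodd, Odd.neg_one_pow hodd]
      field_simp
      rw [hqQ]
      ring
    · rw [if_neg hodd, Even.neg_one_pow (Nat.not_odd_iff_even.mp hodd)]
      field_simp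
      rw [hqQ]
      ring
  rw [Finset.sum_congr rfl hstep2, ← Finset.sum_div]
  rw [hKp j hj1, hKm j hj1]
  simp only [Int.cast_sub, Int.cast_add, Int.cast_sum, Int.cast_mul, Int.cast_natCast]
  congr 1
  have hW : ∀ N ∈ j.divisors,
      ((if Odd (j / N) then (1 : ℚ) else -1) * (N : ℚ) * ((θp N : ℤ) : ℚ)
        - (N : ℚ) * ((θm N : ℤ) : ℚ))
      = (fun g => (if Odd g then (1 : ℚ) else -1) * ((j / g : ℕ) : ℚ) * ((θp (j / g) : ℤ) : ℚ)
          - ((j / g : ℕ) : ℚ) * ((θm (j / g) : ℤ) : ℚ)) (j / N) := by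
    intro N hN
    rw [Nat.mem_divisors] at hN
    have hdd : j / (j / N) = N := Nat.div_div_self hN.1 hN.2
    simp only [hdd]
  rw [Finset.sum_congr rfl hW, Nat.sum_div_divisors j
    (fun g => (if Odd g then (1 : ℚ) else -1) * ((j / g : ℕ) : ℚ) * ((θp (j / g) : ℤ) : ℚ)
      - ((j / g : ℕ) : ℚ) * ((θm (j / g) : ℤ) : ℚ))]
  rw [Finset.sum_sub_distrib]
  have he : j.divisors.filter (fun g => ¬ Odd g) = j.divisors.filter (fun g => Even g) := by
    apply Finset.filter_congr
    intro g _
    simp [Nat.not_odd_iff_even]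
  have hsplit : ∑ g ∈ j.divisors,
        (if Odd g then (1 : ℚ) else -1) * ((j / g : ℕ) : ℚ) * ((θp (j / g) : ℤ) : ℚ)
      = (∑ g ∈ j.divisors.filter (fun g => Odd g), ((j / g : ℕ) : ℚ) * ((θp (j / g) : ℤ) : ℚ))
        - ∑ g ∈ j.divisors.filter (fun g => Even g), ((j / g : ℕ) : ℚ) * ((θp (j / g) : ℤ) : ℚ) := by
    rw [← Finset.sum_filter_add_sum_filter_not j.divisors (fun g => Odd g)
      (fun g => (if Odd g then (1 : ℚ) else -1) * ((j / g : ℕ) : ℚ) * ((θp (j / g) : ℤ) : ℚ)), he]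
    have hO : ∑ g ∈ j.divisors.filter (fun g => Odd g),
          (if Odd g then (1 : ℚ) else -1) * ((j / g : ℕ) : ℚ) * ((θp (j / g) : ℤ) : ℚ)
        = ∑ g ∈ j.divisors.filter (fun g => Odd g), ((j / g : ℕ) : ℚ) * ((θp (j / g) : ℤ) : ℚ) := by
      apply Finset.sum_congr rfl
      intro g hg
      rw [if_pos (Finset.mem_filter.mp hg).2, one_mul]
    have hE : ∑ g ∈ j.divisors.filter (fun g => Even g),
          (if Odd g then (1 : ℚ) else -1) * ((j / g : ℕ) : ℚ) * ((θp (j / g) : ℤ) : ℚ)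
        = -∑ g ∈ j.divisors.filter (fun g => Even g), ((j / g : ℕ) : ℚ) * ((θp (j / g) : ℤ) : ℚ) := by
      rw [← Finset.sum_neg_distrib]
      apply Finset.sum_congr rfl
      intro g hg
      rw [if_neg (by simp [Nat.not_odd_iff_even, (Finset.mem_filter.mp hg).2])]
      ring
    rw [hO, hE]
    ring
  rw [hsplit]
  ring

/-- main computation in the proof of Theorem 3.1: the Feynman-identity
product `∏ (1+z^N)^{θ₊(N)} (1−z^N)^{θ₋(N)}` equals `exp(Σ (K₊(N)−K₋(N))/N · z^N)`
coefficientwise. -/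
theorem feynman_product_eq_exp (θp θm Kp Km : ℕ → ℤ)
    (hKp : ∀ N : ℕ, 1 ≤ N →
      Kp N = ∑ g ∈ N.divisors.filter (fun g => Odd g), ((N / g : ℕ) : ℤ) * θp (N / g))
    (hKm : ∀ N : ℕ, 1 ≤ N →
      Km N = ∑ g ∈ N.divisors.filter (fun g => Even g), ((N / g : ℕ) : ℤ) * θp (N / g)
        + ∑ g ∈ N.divisors, ((N / g : ℕ) : ℤ) * θm (N / g)) :
    ∀ n : ℕ,
      PowerSeries.coeff n (∏ N ∈ Finset.Icc 1 n,
          fzpow (1 + PowerSeries.X ^ N) (θp N) * fzpow (1 - PowerSeries.X ^ N) (θm N))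
      = PowerSeries.coeff n (formalExp (PowerSeries.mk fun N =>
          if N = 0 then 0 else ((Kp N - Km N : ℤ) : ℚ) / (N : ℚ))) := by
  intro n
  set A : PowerSeries ℚ := ∑ N ∈ Finset.Icc 1 n, (PowerSeries.C ((θp N : ℤ) : ℚ) * Lg (-1) N
      + PowerSeries.C ((θm N : ℤ) : ℚ) * Lg 1 N) with hA
  have hA0 : constantCoeff A = 0 := constantCoeff_A θp θm n
  have hprodeq : (∏ N ∈ Finset.Icc 1 n,
      fzpow (1 + PowerSeries.X ^ N) (θp N) * fzpow (1 - PowerSeries.X ^ N) (θm N))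
      = formalExp A := by
    apply ode_unique (∑ N ∈ Finset.Icc 1 n, (PowerSeries.C ((θp N : ℤ) : ℚ) * Dg (-1) N
      + PowerSeries.C ((θm N : ℤ) : ℚ) * Dg 1 N))
    · exact derivative_prod_Icc θp θm n
    · rw [derivative_formalExp A hA0, hA, derivative_A]
    · rw [coeff_zero_formalExp, PowerSeries.coeff_zero_eq_constantCoeff, map_prod]
      apply Finset.prod_eq_one
      intro N hN
      have h1 : 1 ≤ N := (Finset.mem_Icc.mp hN).1
      rw [map_mul, constantCoeff_fzpow (constantCoeff_one_add_X_pow N h1),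
        constantCoeff_fzpow (constantCoeff_one_sub_X_pow N h1), mul_one]
  rw [hprodeq]
  apply coeff_formalExp_congr
  intro j hj
  rcases Nat.eq_zero_or_pos j with rfl | hj1
  · rw [PowerSeries.coeff_zero_eq_constantCoeff, hA0, PowerSeries.constantCoeff_mk, if_pos rfl]
  · rw [hA, coeff_A_eq θp θm Kp Km hKp hKm n j hj1 hj, PowerSeries.coeff_mk,
      if_neg (by omega)]
end

section
/- Let ω : ℕ → ℚ be a sequence and define c : ℕ → ℚ by the expansion exp( − Σ_{k≥1} ω(k)/k · X^k ) = 1 − Σ_{i≥1} c(i)·X^i in ℚ⟦X⟧. Then for every N ≥ 1, ω(N) = N · Σ_{s} ((|s| − 1)! / s!) · ∏_{i≥1} c(i)^{s_i}, where the sum ranges over all finitely supported sequences s = (s_i)_{i≥1} of nonnegative integers with Σ_i i·s_i = N, and |s| = Σ_i s_i, s! = ∏_i s_i!. (Theorem 3.1, formula (3.6), the (+) case: recovery of ω(N) = Tr S^N from the coefficients c₊ via the logarithm expansion.) -/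
open Finset PowerSeries

namespace TraceAux

lemma coeff_pow_eq_zero {g : PowerSeries ℚ} (hg : constantCoeff g = 0)
    {j k : ℕ} (h : j < k) : coeff j (g ^ k) = 0 := by
  have hd : (X : ℚ⟦X⟧) ^ k ∣ g ^ k := pow_dvd_pow_of_dvd (X_dvd_iff.mpr hg) k
  exact (X_pow_dvd_iff.mp hd) j h

noncomputable def expS (f : ℚ⟦X⟧) (M : ℕ) : ℚ⟦X⟧ :=
  ∑ k ∈ Finset.range (M + 1), (k.factorial : ℚ)⁻¹ • f ^ k

lemma coeff_formalExp_eq {f : ℚ⟦X⟧} (hf : constantCoeff f = 0) {n M : ℕ} (h : n ≤ M) :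
    coeff n (formalExp f) = coeff n (expS f M) := by
  rw [formalExp, coeff_mk, expS, map_sum]
  rw [← Finset.sum_subset (Finset.range_subset_range.mpr (by omega) : Finset.range (n+1) ⊆ Finset.range (M+1))]
  · refine Finset.sum_congr rfl fun k _ => ?_
    rw [coeff_smul, smul_eq_mul, div_eq_inv_mul]
  · intro k hk hk'
    simp only [Finset.mem_range, not_lt] at hk'
    rw [coeff_smul, coeff_pow_eq_zero hf (by omega), smul_zero]

lemma constantCoeff_formalExp (f : ℚ⟦X⟧) : constantCoeff (formalExp f) = 1 := by
  rw [← coeff_zero_eq_constantCoeff_apply, formalExp, coeff_mk]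
  simp

lemma derivative_expS (f : ℚ⟦X⟧) (M : ℕ) :
    d⁄dX ℚ (expS f (M + 1)) = d⁄dX ℚ f * expS f M := by
  rw [expS, map_sum, Finset.sum_range_succ']
  have h0 : d⁄dX ℚ ((Nat.factorial 0 : ℚ)⁻¹ • f ^ 0) = 0 := by
    simp
  rw [h0, add_zero]
  rw [expS, Finset.mul_sum]
  refine Finset.sum_congr rfl fun k _ => ?_
  rw [Derivation.map_smul, Derivation.leibniz_pow, Nat.succ_sub_one]
  rw [smul_eq_mul (α := ℚ⟦X⟧), ← Nat.cast_smul_eq_nsmul ℚ, smul_smul, mul_smul_comm]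
  congr 1
  · rw [Nat.factorial_succ]
    push_cast
    rw [mul_inv]
    field_simp
  · ring

lemma derivative_formalExp {f : ℚ⟦X⟧} (hf : constantCoeff f = 0) :
    d⁄dX ℚ (formalExp f) = d⁄dX ℚ f * formalExp f := by
  ext n
  rw [coeff_derivative, coeff_formalExp_eq hf (le_refl (n+1)), ← coeff_derivative,
    derivative_expS]
  rw [coeff_mul, coeff_mul]
  refine Finset.sum_congr rfl fun p hp => ?_
  rw [Finset.HasAntidiagonal.mem_antidiagonal] at hp
  rw [← coeff_formalExp_eq hf (by omega : p.2 ≤ n)]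

lemma key {f g : ℚ⟦X⟧} (hf0 : constantCoeff f = 0) (hg0 : constantCoeff g = 0)
    (hde : d⁄dX ℚ (1 - g) = d⁄dX ℚ f * (1 - g)) {N : ℕ} (hN : 1 ≤ N) :
    -(coeff N f * N) =
      ∑ m ∈ Finset.range N, (N : ℚ) / (m + 1) * coeff N (g ^ (m + 1)) := by
  have hdg : d⁄dX ℚ g = -(d⁄dX ℚ f * (1 - g)) := by
    rw [← hde, map_sub]
    simp
  set G : ℚ⟦X⟧ := ∑ m ∈ Finset.range N, g ^ m with hG
  have hgeom : (1 - g) * G = 1 - g ^ N := by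
    have h := geom_sum_mul g N
    calc (1 - g) * G = -(G * (g - 1)) := by ring
    _ = -(g ^ N - 1) := by rw [hG, h]
    _ = 1 - g ^ N := by ring
  have main : -(d⁄dX ℚ g * G) = d⁄dX ℚ f * (1 - g ^ N) := by
    rw [hdg, ← hgeom]; ring
  have h1 : coeff (N - 1) (d⁄dX ℚ f * g ^ N) = 0 := by
    rw [coeff_mul]
    refine Finset.sum_eq_zero fun p hp => ?_
    rw [Finset.HasAntidiagonal.mem_antidiagonal] at hp
    rw [coeff_pow_eq_zero hg0 (show p.2 < N by omega), mul_zero]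
  have hterm : ∀ m : ℕ, coeff (N - 1) (d⁄dX ℚ g * g ^ m) =
      (N : ℚ) / (m + 1) * coeff N (g ^ (m + 1)) := by
    intro m
    have hd : d⁄dX ℚ (g ^ (m + 1)) = ((m + 1 : ℕ) : ℚ) • (g ^ m * d⁄dX ℚ g) := by
      rw [Derivation.leibniz_pow, Nat.succ_sub_one, smul_eq_mul (α := ℚ⟦X⟧),
        ← Nat.cast_smul_eq_nsmul ℚ]
    have hcd := congrArg (coeff (N - 1)) hd
    rw [coeff_derivative, coeff_smul, smul_eq_mul] at hcd
    have hN1 : N - 1 + 1 = N := by omega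
    have hNc : ((N - 1 : ℕ) : ℚ) + 1 = (N : ℚ) := by
      rw [Nat.cast_sub hN]; ring
    rw [hN1, hNc] at hcd
    have hm : ((m : ℚ) + 1) ≠ 0 := by positivity
    rw [mul_comm (d⁄dX ℚ g) (g ^ m)]
    push_cast at hcd
    rw [div_mul_eq_mul_div, eq_div_iff hm]
    linear_combination -hcd
  have hco := congrArg (coeff (N - 1)) main
  rw [mul_sub, mul_one, map_sub, h1, sub_zero, map_neg, hG, Finset.mul_sum, map_sum,
    coeff_derivative] at hco
  have hN1 : N - 1 + 1 = N := by omega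
  have hNc : ((N - 1 : ℕ) : ℚ) + 1 = (N : ℚ) := by
    rw [Nat.cast_sub hN]; ring
  rw [hN1, hNc] at hco
  rw [← hco, neg_neg]
  exact Finset.sum_congr rfl fun m _ => hterm m

/-! ### Combinatorial side -/

def B (M m n : ℕ) : Finset (Fin M → ℕ) :=
  (Fintype.piFinset fun _ : Fin M => Finset.range (M + 1)).filter
    (fun s => (∑ i : Fin M, ((i : ℕ) + 1) * s i) = n ∧ (∑ i : Fin M, s i) = m)

noncomputable def W (c : ℕ → ℚ) (m : ℕ) {M : ℕ} (s : Fin M → ℕ) : ℚ :=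
  (m.factorial : ℚ) / (∏ i : Fin M, ((s i).factorial : ℚ)) * ∏ i : Fin M, c ((i : ℕ) + 1) ^ (s i)

noncomputable def Qn (c : ℕ → ℚ) (M m n : ℕ) : ℚ := ∑ s ∈ B M m n, W c m s

lemma sum_update_split {M : ℕ} (s : Fin M → ℕ) (i : Fin M) (v : ℕ) (G : Fin M → ℕ → ℕ) :
    ∑ j, G j (Function.update s i v j) + G i (s i) = ∑ j, G j (s j) + G i v := by
  rw [← Finset.add_sum_erase _ (fun j => G j (Function.update s i v j)) (Finset.mem_univ i),
      ← Finset.add_sum_erase _ (fun j => G j (s j)) (Finset.mem_univ i),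
      Function.update_self]
  have h : ∑ j ∈ Finset.univ.erase i, G j (Function.update s i v j) =
      ∑ j ∈ Finset.univ.erase i, G j (s j) :=
    Finset.sum_congr rfl fun j hj => by rw [Function.update_of_ne (Finset.mem_erase.mp hj).1]
  rw [h]; ring

lemma prod_update_split {M : ℕ} (s : Fin M → ℕ) (i : Fin M) (v : ℕ) (G : Fin M → ℕ → ℚ) :
    (∏ j, G j (Function.update s i v j)) * G i (s i) = (∏ j, G j (s j)) * G i v := by
  rw [← Finset.mul_prod_erase _ (fun j => G j (Function.update s i v j)) (Finset.mem_univ i),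
      ← Finset.mul_prod_erase _ (fun j => G j (s j)) (Finset.mem_univ i),
      Function.update_self]
  have h : ∏ j ∈ Finset.univ.erase i, G j (Function.update s i v j) =
      ∏ j ∈ Finset.univ.erase i, G j (s j) :=
    Finset.prod_congr rfl fun j hj => by rw [Function.update_of_ne (Finset.mem_erase.mp hj).1]
  rw [h]; ring

lemma mem_B_iff {M m n : ℕ} (s : Fin M → ℕ) :
    s ∈ B M m n ↔ (∀ j, s j < M + 1) ∧ (∑ i : Fin M, ((i : ℕ) + 1) * s i) = n ∧ (∑ i : Fin M, s i) = m := by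
  simp [B, Fintype.mem_piFinset]

lemma prodfact_ne_zero {M : ℕ} (s : Fin M → ℕ) : (∏ i : Fin M, ((s i).factorial : ℚ)) ≠ 0 :=
  Finset.prod_ne_zero_iff.mpr fun i _ => Nat.cast_ne_zero.mpr (Nat.factorial_ne_zero _)

lemma Qn_succ (c : ℕ → ℚ) (M m n : ℕ) (hn : n ≤ M) :
    Qn c M (m + 1) n =
      ∑ a ∈ Finset.range (n + 1), (if a = 0 then 0 else c a * Qn c M m (n - a)) := by
  classical
  -- step A : expand the weight
  have stepA : ∀ s ∈ B M (m + 1) n, W c (m + 1) s =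
      ∑ i : Fin M, (s i : ℚ) *
        ((m.factorial : ℚ) / (∏ j : Fin M, ((s j).factorial : ℚ)) * ∏ j : Fin M, c ((j : ℕ) + 1) ^ (s j)) := by
    intro s hs
    rw [← Finset.sum_mul]
    have hcard : (∑ i : Fin M, (s i : ℚ)) = (m : ℚ) + 1 := by
      have h := ((mem_B_iff s).mp hs).2.2
      rw [← Nat.cast_sum, h]
      push_cast
      ring
    rw [hcard, W, Nat.factorial_succ]
    push_cast
    ring
  rw [Qn, Finset.sum_congr rfl stepA, Finset.sum_comm]
  -- step C : evaluate each inner sum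
  have stepC : ∀ i : Fin M,
      (∑ s ∈ B M (m + 1) n, (s i : ℚ) *
        ((m.factorial : ℚ) / (∏ j : Fin M, ((s j).factorial : ℚ)) * ∏ j : Fin M, c ((j : ℕ) + 1) ^ (s j))) =
      if (i : ℕ) + 1 ≤ n then c ((i : ℕ) + 1) * Qn c M m (n - ((i : ℕ) + 1)) else 0 := by
    intro i
    by_cases hin : (i : ℕ) + 1 ≤ n
    · rw [if_pos hin]
      rw [← Finset.sum_filter_of_ne (p := fun s => s i ≠ 0)
        (by intro s _ hw; intro h0; apply hw; rw [h0]; push_cast; ring)]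
      rw [Qn, Finset.mul_sum]
      refine Finset.sum_nbij' (i := fun s => Function.update s i (s i - 1))
        (j := fun t => Function.update t i (t i + 1)) ?_ ?_ ?_ ?_ ?_
      · -- forward membership
        intro s hs
        rw [Finset.mem_filter] at hs
        obtain ⟨hsB, hsi⟩ := hs
        obtain ⟨hpi, hsum, hcard⟩ := (mem_B_iff s).mp hsB
        obtain ⟨X, hX⟩ : ∃ X, s i = X + 1 := ⟨s i - 1, by omega⟩
        have hupd : Function.update s i (s i - 1) = Function.update s i X := by
          rw [hX, Nat.add_sub_cancel]
        rw [hupd, mem_B_iff]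
        refine ⟨?_, ?_, ?_⟩
        · intro j
          rcases eq_or_ne j i with rfl | hne
          · have hpj := hpi j
            rw [Function.update_self]
            omega
          · rw [Function.update_of_ne hne]; exact hpi j
        · have h := sum_update_split s i X (fun j : Fin M => fun x => ((j : ℕ) + 1) * x)
          rw [hsum, hX] at h
          have hexp : ((i : ℕ) + 1) * (X + 1) = ((i : ℕ) + 1) * X + ((i : ℕ) + 1) := by ring
          rw [hexp] at h
          generalize hy : ((i : ℕ) + 1) * X = y at h
          omega
        · have h := sum_update_split s i X (fun _ x => x)
          rw [hcard, hX] at h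
          omega
      · -- backward membership
        intro t ht
        obtain ⟨hpi, hsum, hcard⟩ := (mem_B_iff t).mp ht
        have hti : ((i : ℕ) + 1) * t i ≤ n - ((i : ℕ) + 1) := by
          rw [← hsum]
          exact Finset.single_le_sum (f := fun j : Fin M => ((j : ℕ) + 1) * t j)
            (fun j _ => Nat.zero_le _) (Finset.mem_univ i)
        have hti2 : t i ≤ n - ((i : ℕ) + 1) := le_trans (Nat.le_mul_of_pos_left _ (by omega)) hti
        rw [Finset.mem_filter, mem_B_iff]
        refine ⟨⟨?_, ?_, ?_⟩, ?_⟩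
        · intro j
          rcases eq_or_ne j i with rfl | hne
          · rw [Function.update_self]; omega
          · rw [Function.update_of_ne hne]; exact hpi j
        · have h := sum_update_split t i (t i + 1) (fun j x => ((j : ℕ) + 1) * x)
          rw [hsum] at h
          have hexp : ((i : ℕ) + 1) * (t i + 1) = ((i : ℕ) + 1) * t i + ((i : ℕ) + 1) := by ring
          rw [hexp] at h
          generalize hy : ((i : ℕ) + 1) * t i = y at h hti
          omega
        · have h := sum_update_split t i (t i + 1) (fun _ x => x)
          rw [hcard] at h
          omega
        · rw [Function.update_self]; omega
      · -- left inverse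
        intro s hs
        rw [Finset.mem_filter] at hs
        have hsi : s i ≠ 0 := hs.2
        rw [Function.update_self, Function.update_idem]
        have h1 : s i - 1 + 1 = s i := by omega
        rw [h1, Function.update_eq_self]
      · -- right inverse
        intro t ht
        rw [Function.update_self, Function.update_idem, Nat.add_sub_cancel,
          Function.update_eq_self]
      · -- values agree
        intro s hs
        rw [Finset.mem_filter] at hs
        obtain ⟨hsB, hsi⟩ := hs
        obtain ⟨X, hX⟩ : ∃ X, s i = X + 1 := ⟨s i - 1, by omega⟩
        have hupd : Function.update s i (s i - 1) = Function.update s i X := by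
          rw [hX, Nat.add_sub_cancel]
        rw [hupd]
        set t := Function.update s i X with hts
        have hP : (∏ j : Fin M, ((s j).factorial : ℚ)) =
            ((X : ℚ) + 1) * ∏ j : Fin M, ((t j).factorial : ℚ) := by
          have h := prod_update_split s i X (fun _ x => ((x).factorial : ℚ))
          rw [hX, Nat.factorial_succ] at h
          push_cast at h
          rw [← hts] at h
          have hXf : ((X.factorial : ℚ)) ≠ 0 := Nat.cast_ne_zero.mpr (Nat.factorial_ne_zero _)
          refine mul_right_cancel₀ hXf ?_
          linear_combination -h
        have hPi : (∏ j : Fin M, c ((j : ℕ) + 1) ^ (s j)) =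
            c ((i : ℕ) + 1) * ∏ j : Fin M, c ((j : ℕ) + 1) ^ (t j) := by
          have h := prod_update_split s i X (fun j : Fin M => fun x => c ((j : ℕ) + 1) ^ x)
          rw [hX, pow_succ] at h
          rw [← hts] at h
          by_cases hc0 : c ((i : ℕ) + 1) = 0
          · rcases Nat.eq_zero_or_pos X with rfl | hXpos
            · simp only [pow_zero, mul_one, one_mul] at h
              rw [← h, hc0]
              ring
            · rw [hc0, zero_mul]
              refine Finset.prod_eq_zero (Finset.mem_univ i) ?_
              rw [hX, hc0]
              exact zero_pow (by omega)
          · have hcX : c ((i : ℕ) + 1) ^ X ≠ 0 := pow_ne_zero _ hc0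
            refine mul_right_cancel₀ hcX ?_
            linear_combination -h
        rw [W, hP, hPi, hX]
        have hPt := prodfact_ne_zero t
        push_cast
        field_simp
    · rw [if_neg hin]
      refine Finset.sum_eq_zero fun s hs => ?_
      obtain ⟨hpi, hsum, hcard⟩ := (mem_B_iff s).mp hs
      have hle : ((i : ℕ) + 1) * s i ≤ n := by
        rw [← hsum]
        exact Finset.single_le_sum (f := fun j : Fin M => ((j : ℕ) + 1) * s j)
          (fun j _ => Nat.zero_le _) (Finset.mem_univ i)
      have : s i = 0 := by
        by_contra h0
        have : (i : ℕ) + 1 ≤ ((i : ℕ) + 1) * s i := Nat.le_mul_of_pos_right _ (by omega)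
        omega
      rw [this]
      push_cast
      ring
  rw [Finset.sum_congr rfl fun i _ => stepC i]
  -- step D : reindex
  rw [Fin.sum_univ_eq_sum_range
    (fun a => if a + 1 ≤ n then c (a + 1) * Qn c M m (n - (a + 1)) else 0) M]
  rw [← Finset.sum_filter]
  have hfil : (Finset.range M).filter (fun a => a + 1 ≤ n) = Finset.range n := by
    ext a; simp only [Finset.mem_filter, Finset.mem_range]; omega
  rw [hfil, Finset.sum_range_succ']
  simp only [if_neg (by omega : ¬ (0:ℕ) = 0 → False)]
  simp only [Nat.succ_ne_zero, if_false, if_pos rfl]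
  norm_num

lemma Qn_zero (c : ℕ → ℚ) (M n : ℕ) : Qn c M 0 n = if n = 0 then 1 else 0 := by
  classical
  rcases eq_or_ne n 0 with rfl | hn
  · rw [if_pos rfl, Qn]
    have hB : B M 0 0 = {fun _ => 0} := by
      ext s
      rw [mem_B_iff, Finset.mem_singleton]
      constructor
      · rintro ⟨-, -, hcard⟩
        funext j
        have := (Finset.sum_eq_zero_iff.mp hcard) j (Finset.mem_univ j)
        simp [this]
      · rintro rfl
        refine ⟨fun j => by simp, by simp, by simp⟩
    rw [hB, Finset.sum_singleton, W]
    simp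
  · rw [if_neg hn, Qn]
    have hB : B M 0 n = ∅ := by
      ext s
      rw [mem_B_iff]
      simp only [Finset.notMem_empty, iff_false]
      rintro ⟨-, hsum, hcard⟩
      apply hn
      rw [← hsum]
      refine Finset.sum_eq_zero fun j _ => ?_
      have := (Finset.sum_eq_zero_iff.mp hcard) j (Finset.mem_univ j)
      simp [this]
    rw [hB, Finset.sum_empty]

lemma Qn_eq_coeff (c : ℕ → ℚ) {g : ℚ⟦X⟧} (hg0 : constantCoeff g = 0)
    (hgc : ∀ a : ℕ, 1 ≤ a → coeff a g = c a) :
    ∀ m M n : ℕ, n ≤ M → Qn c M m n = coeff n (g ^ m) := by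
  intro m
  induction m with
  | zero =>
    intro M n hn
    rw [Qn_zero, pow_zero, coeff_one]
  | succ m ih =>
    intro M n hn
    rw [Qn_succ c M m n hn, pow_succ, mul_comm (g ^ m) g, coeff_mul,
      Finset.Nat.sum_antidiagonal_eq_sum_range_succ_mk]
    refine Finset.sum_congr rfl fun a ha => ?_
    rw [Finset.mem_range] at ha
    rcases eq_or_ne a 0 with rfl | ha0
    · rw [if_pos rfl]
      dsimp only
      rw [coeff_zero_eq_constantCoeff_apply, hg0, zero_mul]
    · rw [if_neg ha0]
      dsimp only
      rw [hgc a (by omega), ih M (n - a) (by omega)]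

lemma B_zero {M n : ℕ} (hn : n ≠ 0) : B M 0 n = ∅ := by
  ext s
  rw [mem_B_iff]
  simp only [Finset.notMem_empty, iff_false]
  rintro ⟨-, hsum, hcard⟩
  apply hn
  rw [← hsum]
  refine Finset.sum_eq_zero fun j _ => ?_
  have := (Finset.sum_eq_zero_iff.mp hcard) j (Finset.mem_univ j)
  simp [this]

end TraceAux


/-- Theorem 3.1, formula (3.6), the `+` case: recovery of
`ω(N)` from the coefficients `c(i)` of `exp(−Σ ω(k)/k X^k) = 1 − Σ c(i) X^i`.
A finitely supported sequence `s = (s_i)_{i≥1}` with `Σ i·s_i = N` is encoded as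
`s : Fin N → Fin (N+1)`, with `s ⟨i-1⟩` playing the role of `s_i`
(note `s_i = 0` for `i > N` and `s_i ≤ N` automatically). -/
theorem trace_from_coefficients (ω c : ℕ → ℚ)
    (hc : ∀ i : ℕ, 1 ≤ i → c i = - PowerSeries.coeff i
      (formalExp (- PowerSeries.mk fun k => if k = 0 then 0 else ω k / (k : ℚ)))) :
    ∀ N : ℕ, 1 ≤ N →
      ω N = (N : ℚ) *
        ∑ s ∈ Finset.univ.filter (fun s : Fin N → Fin (N + 1) =>
            (∑ i : Fin N, ((i : ℕ) + 1) * (s i : ℕ)) = N),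
          (((∑ i : Fin N, (s i : ℕ)) - 1).factorial : ℚ) /
              (∏ i : Fin N, ((s i : ℕ).factorial : ℚ)) *
            ∏ i : Fin N, c ((i : ℕ) + 1) ^ ((s i : ℕ)) := by
  classical
  intro N hN
  set f : ℚ⟦X⟧ := -(PowerSeries.mk fun k => if k = 0 then 0 else ω k / (k : ℚ)) with hf
  have hf0 : PowerSeries.constantCoeff f = 0 := by
    rw [hf, map_neg, ← coeff_zero_eq_constantCoeff_apply, coeff_mk, if_pos rfl, neg_zero]
  set E : ℚ⟦X⟧ := formalExp f with hE
  set g : ℚ⟦X⟧ := 1 - E with hg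
  have hg0 : PowerSeries.constantCoeff g = 0 := by
    rw [hg, map_sub, map_one, hE, TraceAux.constantCoeff_formalExp, sub_self]
  have hgc : ∀ a : ℕ, 1 ≤ a → PowerSeries.coeff a g = c a := by
    intro a ha
    rw [hg, map_sub, PowerSeries.coeff_one, if_neg (by omega), hc a ha, hE]
    ring
  have hde : d⁄dX ℚ (1 - g) = d⁄dX ℚ f * (1 - g) := by
    have h1 : (1 : ℚ⟦X⟧) - g = E := by rw [hg]; ring
    rw [h1, hE]
    exact TraceAux.derivative_formalExp hf0
  have hkey := TraceAux.key hf0 hg0 hde hN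
  have hfN : PowerSeries.coeff N f = -(ω N / N) := by
    rw [hf, map_neg, coeff_mk, if_neg (by omega)]
  have hNQ : (N : ℚ) ≠ 0 := Nat.cast_ne_zero.mpr (by omega)
  have hωN : ω N = -(PowerSeries.coeff N f * N) := by
    rw [hfN]
    field_simp
  -- convert the Fin-valued sum to a sum over B-style sets
  set C : Finset (Fin N → ℕ) :=
    (Fintype.piFinset fun _ : Fin N => Finset.range (N + 1)).filter
      (fun t => (∑ i : Fin N, ((i : ℕ) + 1) * t i) = N) with hC
  have hconv : (∑ s ∈ Finset.univ.filter (fun s : Fin N → Fin (N + 1) =>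
        (∑ i : Fin N, ((i : ℕ) + 1) * (s i : ℕ)) = N),
      (((∑ i : Fin N, (s i : ℕ)) - 1).factorial : ℚ) /
          (∏ i : Fin N, ((s i : ℕ).factorial : ℚ)) *
        ∏ i : Fin N, c ((i : ℕ) + 1) ^ ((s i : ℕ)))
      = ∑ t ∈ C, (((∑ i : Fin N, t i) - 1).factorial : ℚ) /
          (∏ i : Fin N, ((t i).factorial : ℚ)) * ∏ i : Fin N, c ((i : ℕ) + 1) ^ (t i) := by
    refine Finset.sum_nbij' (i := fun s k => ((s k : ℕ) : ℕ))
      (j := fun t k => (open Fin.NatCast in ((t k : ℕ) : Fin (N + 1)))) ?_ ?_ ?_ ?_ ?_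
    · intro s hs
      rw [Finset.mem_filter] at hs
      rw [hC, Finset.mem_filter, Fintype.mem_piFinset]
      exact ⟨fun k => Finset.mem_range.mpr (s k).isLt, hs.2⟩
    · intro t ht
      rw [hC, Finset.mem_filter, Fintype.mem_piFinset] at ht
      obtain ⟨hpi, hsum⟩ := ht
      rw [Finset.mem_filter]
      refine ⟨Finset.mem_univ _, ?_⟩
      dsimp only
      refine Eq.trans (Finset.sum_congr rfl fun k _ => ?_) hsum
      rw [Fin.val_cast_of_lt (Finset.mem_range.mp (hpi k))]
    · intro s hs
      funext k
      exact Fin.cast_val_eq_self (s k)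
    · intro t ht
      rw [hC, Finset.mem_filter, Fintype.mem_piFinset] at ht
      funext k
      exact Fin.val_cast_of_lt (Finset.mem_range.mp (ht.1 k))
    · intro s hs
      rfl
  rw [hconv]
  -- fiberwise decomposition over m = ∑ t i
  have hmaps : ∀ t ∈ C, (∑ i : Fin N, t i) ∈ Finset.range (N + 1) := by
    intro t ht
    rw [hC, Finset.mem_filter] at ht
    rw [Finset.mem_range]
    have : (∑ i : Fin N, t i) ≤ ∑ i : Fin N, ((i : ℕ) + 1) * t i :=
      Finset.sum_le_sum fun i _ => Nat.le_mul_of_pos_left _ (by omega)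
    omega
  rw [← Finset.sum_fiberwise_of_maps_to hmaps]
  have hfib : ∀ m : ℕ, C.filter (fun t => (∑ i : Fin N, t i) = m) = TraceAux.B N m N := by
    intro m
    rw [hC, TraceAux.B, Finset.filter_filter]
  have hfibval : ∀ m ∈ Finset.range (N + 1),
      (∑ t ∈ C.filter (fun t => (∑ i : Fin N, t i) = m),
        (((∑ i : Fin N, t i) - 1).factorial : ℚ) /
          (∏ i : Fin N, ((t i).factorial : ℚ)) * ∏ i : Fin N, c ((i : ℕ) + 1) ^ (t i))
      = if m = 0 then 0 else (m : ℚ)⁻¹ * PowerSeries.coeff N (g ^ m) := by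
    intro m _
    rcases eq_or_ne m 0 with rfl | hm0
    · rw [if_pos rfl, hfib 0, TraceAux.B_zero (by omega), Finset.sum_empty]
    · rw [if_neg hm0, hfib m]
      obtain ⟨m', rfl⟩ : ∃ m', m = m' + 1 := ⟨m - 1, by omega⟩
      rw [← TraceAux.Qn_eq_coeff c hg0 hgc (m' + 1) N N le_rfl, TraceAux.Qn, Finset.mul_sum]
      refine Finset.sum_congr rfl fun t ht => ?_
      have hcard := ((TraceAux.mem_B_iff t).mp ht).2.2
      rw [hcard, TraceAux.W, Nat.add_sub_cancel, Nat.factorial_succ]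
      have hPt := TraceAux.prodfact_ne_zero t
      push_cast
      field_simp
  rw [Finset.sum_congr rfl hfibval, Finset.sum_range_succ']
  simp only [Nat.succ_ne_zero, if_false, if_true, eq_self_iff_true, add_zero]
  rw [hωN, hkey, Finset.mul_sum]
  refine Finset.sum_congr rfl fun m _ => ?_
  push_cast
  rw [div_eq_mul_inv]
  ring
end

section
/- Let a, c : ℕ → ℚ be sequences such that (1 + Σ_{n≥1} a(n)·X^n)² = 1 − Σ_{n≥1} c(n)·X^n in ℚ⟦X⟧. Then for every n ≥ 1, 2n·a(n) = −n·c(n) + Σ_{k=1}^{n−1} (3k − n)·a(k)·c(n−k). (Theorem 3.3, formula (3.13): the recursion relating the coefficients a(n) of the Euler polynomial E_G(z) = 1 + Σ a(n)z^n to the coefficients c₊(n) defined by E_G²(z) = 1 − Σ c₊(n)z^n.) -/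
open Finset PowerSeries

/-- Theorem 3.3, formula (3.13): the recursion relating the
coefficients `a(n)` of the Euler polynomial `E_G(z) = 1 + Σ a(n) z^n` to the
coefficients `c(n)` defined by `E_G²(z) = 1 − Σ c(n) z^n`. -/
theorem euler_coefficients_recursion (a c : ℕ → ℚ)
    (h : ((1 : PowerSeries ℚ) + PowerSeries.mk fun n => if n = 0 then 0 else a n) ^ 2 =
        (1 : PowerSeries ℚ) - PowerSeries.mk fun n => if n = 0 then 0 else c n) :
    ∀ n : ℕ, 1 ≤ n →
      2 * (n : ℚ) * a n =
        -(n : ℚ) * c n + ∑ k ∈ Finset.Icc 1 (n - 1), (3 * (k : ℚ) - n) * a k * c (n - k) := by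
  set A : PowerSeries ℚ := PowerSeries.mk fun n => if n = 0 then 0 else a n with hA
  set C : PowerSeries ℚ := PowerSeries.mk fun n => if n = 0 then 0 else c n with hC
  have h1 : (2 : ℚ⟦X⟧) * ((1 + A) * d⁄dX ℚ A) = -(d⁄dX ℚ C) := by
    have h1 := congrArg (d⁄dX ℚ) h
    rw [Derivation.leibniz_pow, map_sub, map_add, Derivation.map_one_eq_zero] at h1
    simpa [smul_eq_mul, mul_comm, mul_assoc, mul_left_comm] using h1
  have hd : (PowerSeries.C (2 : ℚ)) * ((1 - C) * d⁄dX ℚ A) = -((1 + A) * d⁄dX ℚ C) := by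
    have h2 : (PowerSeries.C (2 : ℚ)) = (2 : ℚ⟦X⟧) := by simp [map_ofNat]
    rw [h2]
    linear_combination (1 + A) * h1 - 2 * (d⁄dX ℚ A) * h
  intro n hn
  obtain ⟨m, rfl⟩ : ∃ m, n = m + 1 := ⟨n - 1, by omega⟩
  have hco := congrArg (PowerSeries.coeff (R := ℚ) m) hd
  rw [coeff_C_mul, map_neg, coeff_mul, coeff_mul,
    Finset.Nat.sum_antidiagonal_eq_sum_range_succ_mk,
    Finset.Nat.sum_antidiagonal_eq_sum_range_succ_mk,
    Finset.sum_range_succ', Finset.sum_range_succ'] at hco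
  simp only [coeff_derivative, hA, hC, coeff_mk, map_sub, map_add, coeff_one, map_one,
    Nat.succ_ne_zero, if_false, if_true, Nat.sub_zero, Nat.add_eq_zero, and_false,
    one_ne_zero, ite_false, ite_true, zero_sub, one_mul, add_zero, neg_mul, sub_zero,
    zero_add] at hco
  -- canonical sums
  have hs1 : ∑ x ∈ Finset.range m,
        -(c (x + 1) * (a (m - (x + 1) + 1) * ((↑(m - (x + 1)) : ℚ) + 1)))
      = -∑ x ∈ Finset.range m, c (x + 1) * a (m - x) * ((m : ℚ) - x) := by
    rw [← Finset.sum_neg_distrib]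
    refine Finset.sum_congr rfl fun x hx => ?_
    have hx' : x < m := Finset.mem_range.mp hx
    have e1 : m - (x + 1) + 1 = m - x := by omega
    have e2 : ((m - (x + 1) : ℕ) : ℚ) + 1 = (m : ℚ) - x := by
      rw [Nat.cast_sub (by omega)]; push_cast; ring
    rw [e1, e2]; ring
  have hs2 : ∑ x ∈ Finset.range m,
        a (x + 1) * (c (m - (x + 1) + 1) * ((↑(m - (x + 1)) : ℚ) + 1))
      = ∑ x ∈ Finset.range m, a (x + 1) * c (m - x) * ((m : ℚ) - x) := by
    refine Finset.sum_congr rfl fun x hx => ?_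
    have hx' : x < m := Finset.mem_range.mp hx
    have e1 : m - (x + 1) + 1 = m - x := by omega
    have e2 : ((m - (x + 1) : ℕ) : ℚ) + 1 = (m : ℚ) - x := by
      rw [Nat.cast_sub (by omega)]; push_cast; ring
    rw [e1, e2]; ring
  rw [hs1, hs2] at hco
  have hrefl : ∑ x ∈ Finset.range m, c (x + 1) * a (m - x) * ((m : ℚ) - x)
      = ∑ x ∈ Finset.range m, a (x + 1) * c (m - x) * ((x : ℚ) + 1) := by
    rw [← Finset.sum_range_reflect fun j => c (j + 1) * a (m - j) * ((m : ℚ) - j)]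
    refine Finset.sum_congr rfl fun x hx => ?_
    have hx' : x < m := Finset.mem_range.mp hx
    have e1 : m - 1 - x + 1 = m - x := by omega
    have e2 : m - (m - 1 - x) = x + 1 := by omega
    have e3 : ((m - 1 - x : ℕ) : ℚ) = (m : ℚ) - 1 - x := by
      rw [Nat.cast_sub (by omega), Nat.cast_sub (by omega)]; push_cast; ring
    rw [e1, e2, e3]; ring
  have hgoal : ∑ k ∈ Finset.Icc 1 (m + 1 - 1), (3 * (k : ℚ) - (m + 1 : ℕ)) * a k * c (m + 1 - k)
      = 2 * ∑ x ∈ Finset.range m, a (x + 1) * c (m - x) * ((x : ℚ) + 1)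
        - ∑ x ∈ Finset.range m, a (x + 1) * c (m - x) * ((m : ℚ) - x) := by
    rw [Nat.add_sub_cancel, ← Finset.Ico_add_one_right_eq_Icc, Finset.sum_Ico_eq_sum_range,
      Nat.add_sub_cancel, Finset.mul_sum, ← Finset.sum_sub_distrib]
    refine Finset.sum_congr rfl fun x hx => ?_
    have hx' : x < m := Finset.mem_range.mp hx
    have e1 : m + 1 - (1 + x) = m - x := by omega
    rw [e1]
    push_cast
    ring
  rw [hgoal]
  push_cast
  linear_combination hco + 2 * hrefl
end

section
/- Let R ≥ 1 be a natural number and for N ≥ 1 define the necklace number M(N;R) = (1/N)·Σ_{g ∣ N} μ(g)·R^{N/g}, where μ is the Möbius function. Then each M(N;R) is a nonnegative integer, and in ℤ⟦X⟧ the identity ∏_{N≥1} (1−X^N)^{M(N;R)} = 1 − R·X holds coefficientwise; that is, for every n ≥ 0 the coefficient of X^n in the finite product ∏_{N=1}^{n} (1−X^N)^{M(N;R)} equals the coefficient of X^n in 1 − R·X. (Proposition 1.1, the Witt identity, i.e. the (+,−,+) case of (1.3) with Witt formula (1.4): M(N;R) is the dimension of the degree-N homogeneous component of the free Lie algebra on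 an R-dimensional vector space.) -/
open Finset ArithmeticFunction PowerSeries
open scoped ArithmeticFunction.Moebius ArithmeticFunction.zeta

namespace WittAux



lemma fermat_int (p : ℕ) (hp : p.Prime) (x : ℤ) : (p : ℤ) ∣ x ^ p - x := by
  haveI : Fact p.Prime := ⟨hp⟩
  have h : ((x ^ p - x : ℤ) : ZMod p) = 0 := by push_cast [ZMod.pow_card]; ring
  exact (ZMod.intCast_zmod_eq_zero_iff_dvd _ p).mp h

lemma pow_pow_sub (p : ℕ) (hp : p.Prime) (e : ℕ) (he : 1 ≤ e) (y : ℤ) :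
    (p : ℤ) ^ e ∣ y ^ p ^ e - y ^ p ^ (e - 1) := by
  have h := dvd_sub_pow_of_dvd_sub (R := ℤ) (p := p) (a := y ^ p) (b := y)
    (fermat_int p hp y) (e - 1)
  have h1 : e - 1 + 1 = e := Nat.succ_pred_eq_of_pos he
  rw [h1] at h
  have h2 : (y ^ p) ^ p ^ (e - 1) = y ^ p ^ e := by
    rw [← pow_mul, ← pow_succ', h1]
  push_cast at h ⊢
  rwa [h2] at h

/-- divisors of `p*m` for `p` prime not dividing `m`. -/
lemma divisors_prime_mul {p m : ℕ} (hp : p.Prime) (hpm : ¬ p ∣ m) (hm : m ≠ 0) :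
    (p * m).divisors = m.divisors ∪ m.divisors.image (p * ·) := by
  ext g
  simp only [Nat.mem_divisors, Finset.mem_union, Finset.mem_image]
  constructor
  · rintro ⟨hg, -⟩
    by_cases hpg : p ∣ g
    · obtain ⟨h, rfl⟩ := hpg
      right
      exact ⟨h, ⟨(mul_dvd_mul_iff_left hp.ne_zero).mp hg, hm⟩, rfl⟩
    · left
      have hc : g.Coprime p := ((hp.coprime_iff_not_dvd).mpr hpg).symm
      exact ⟨hc.dvd_of_dvd_mul_left hg, hm⟩
  · rintro (⟨hg, -⟩ | ⟨h, ⟨hh, -⟩, rfl⟩)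
    · exact ⟨hg.mul_left p, mul_ne_zero hp.ne_zero hm⟩
    · exact ⟨mul_dvd_mul_left p hh, mul_ne_zero hp.ne_zero hm⟩


def S (R N : ℕ) : ℤ := ∑ g ∈ N.divisors, (μ g : ℤ) * (R : ℤ) ^ (N / g)

lemma prime_pow_dvd_S (R : ℕ) {N p k : ℕ} (hN : N ≠ 0) (hp : p.Prime) (hk : p ^ k ∣ N) :
    (p : ℤ) ^ k ∣ S R N := by
  rcases Nat.eq_zero_or_pos k with rfl | hk1
  · simp
  set e := N.factorization p with he
  have hke : k ≤ e := (Nat.Prime.pow_dvd_iff_le_factorization hp hN).mp hk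
  have he1 : 1 ≤ e := le_trans hk1 hke
  set m := N / p ^ e with hm
  have hNm : p ^ e * m = N := Nat.ordProj_mul_ordCompl_eq_self N p
  have hpm : ¬ p ∣ m := Nat.not_dvd_ordCompl hp hN
  have hm0 : m ≠ 0 := Nat.ordCompl_pos p hN |>.ne'
  suffices h : (p : ℤ) ^ e ∣ S R N by
    exact dvd_trans (pow_dvd_pow _ hke) h
  -- Step 1: restrict the sum to divisors of p * m
  have hsub : (p * m).divisors ⊆ N.divisors := by
    apply Nat.divisors_subset_of_dvd hN
    rw [← hNm]
    exact mul_dvd_mul_right (dvd_pow_self p (by omega)) m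
  have hstep1 : S R N = ∑ g ∈ (p * m).divisors, (μ g : ℤ) * (R : ℤ) ^ (N / g) := by
    rw [S, ← Finset.sum_subset hsub]
    intro g hg hg'
    have hμ : μ g = 0 := by
      by_contra hne
      have hsq : Squarefree g := moebius_ne_zero_iff_squarefree.mp hne
      apply hg'
      rw [Nat.mem_divisors]
      refine ⟨?_, mul_ne_zero hp.ne_zero hm0⟩
      have h1 : g = ∏ q ∈ g.primeFactors, q := (Nat.prod_primeFactors_of_squarefree hsq).symm
      have h2 : g.primeFactors ⊆ N.primeFactors :=
        Nat.primeFactors_mono (Nat.mem_divisors.mp hg).1 hN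
      have h3 : N.primeFactors = insert p m.primeFactors := by
        rw [← hNm, Nat.primeFactors_mul (pow_ne_zero _ hp.ne_zero) hm0,
        Nat.primeFactors_prime_pow (k := e) (by omega) hp]
        ext q; simp [or_comm]
      have h4 : ∏ q ∈ N.primeFactors, q ∣ p * m := by
        rw [h3, Finset.prod_insert (fun hmem => hpm (Nat.dvd_of_mem_primeFactors hmem))]
        exact mul_dvd_mul_left p (Nat.prod_primeFactors_dvd m)
      calc g = ∏ q ∈ g.primeFactors, q := h1
        _ ∣ ∏ q ∈ N.primeFactors, q := Finset.prod_dvd_prod_of_subset _ _ _ h2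
        _ ∣ p * m := h4
    rw [hμ]
    simp
  -- Step 2: split the sum
  have hdisj : Disjoint m.divisors (m.divisors.image (p * ·)) := by
    rw [Finset.disjoint_right]
    rintro g hgim hgm
    obtain ⟨h, -, rfl⟩ := Finset.mem_image.mp hgim
    exact hpm (dvd_trans ⟨h, rfl⟩ (Nat.mem_divisors.mp hgm).1)
  have hstep2 : S R N = ∑ h ∈ m.divisors,
      ((μ h : ℤ) * (R : ℤ) ^ (N / h) + (μ (p * h) : ℤ) * (R : ℤ) ^ (N / (p * h))) := by
    rw [hstep1, divisors_prime_mul hp hpm hm0, Finset.sum_union hdisj, Finset.sum_add_distrib]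
    congr 1
    rw [Finset.sum_image]
    intro x _ y _ hxy
    exact Nat.eq_of_mul_eq_mul_left hp.pos hxy
  rw [hstep2]
  apply Finset.dvd_sum
  intro h hh
  have hhm : h ∣ m := (Nat.mem_divisors.mp hh).1
  have hph : ¬ p ∣ h := fun hd => hpm (dvd_trans hd hhm)
  have hμph : (μ (p * h) : ℤ) = -(μ h : ℤ) := by
    rw [isMultiplicative_moebius.map_mul_of_coprime
      ((Nat.Prime.coprime_iff_not_dvd hp).mpr hph), moebius_apply_prime hp]
    push_cast
    ring
  have hNh : N / h = p ^ e * (m / h) := by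
    rw [← hNm, Nat.mul_div_assoc _ hhm]
  have hNph : N / (p * h) = p ^ (e - 1) * (m / h) := by
    have : p ^ e * m = p ^ (e - 1) * (p * m) := by
      rw [← mul_assoc, ← pow_succ, Nat.sub_add_cancel he1]
    rw [← hNm, this, Nat.mul_div_assoc _ (mul_dvd_mul_left p hhm),
      Nat.mul_div_mul_left _ _ hp.pos]
  rw [hμph, hNh, hNph]
  have key := pow_pow_sub p hp e he1 ((R : ℤ) ^ (m / h))
  rw [mul_comm (p ^ e) (m / h), mul_comm (p ^ (e - 1)) (m / h), pow_mul, pow_mul]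
  have : (μ h : ℤ) * ((R : ℤ) ^ (m / h)) ^ p ^ e + -(μ h : ℤ) * ((R : ℤ) ^ (m / h)) ^ p ^ (e - 1)
      = (μ h : ℤ) * (((R : ℤ) ^ (m / h)) ^ p ^ e - ((R : ℤ) ^ (m / h)) ^ p ^ (e - 1)) := by ring
  rw [this]
  exact Dvd.dvd.mul_left key _



lemma dvd_S (R : ℕ) {N : ℕ} (hN : N ≠ 0) : (N : ℤ) ∣ S R N := by
  rw [← Int.natAbs_dvd_natAbs, Int.natAbs_natCast]
  rw [Nat.dvd_iff_prime_pow_dvd_dvd]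
  intro p k hp hpk
  have h := prime_pow_dvd_S R hN (hp) hpk
  simpa [Int.natAbs_pow] using Int.natAbs_dvd_natAbs.mpr h

lemma geo_sum_lt (R : ℕ) (hR : 2 ≤ R) (K : ℕ) :
    ∑ d ∈ Icc 1 K, (R : ℤ) ^ d < (R : ℤ) ^ (K + 1) := by
  induction K with
  | zero => simp; positivity
  | succ K ih =>
    rw [Finset.sum_Icc_succ_top (by omega)]
    have h2R : (2:ℤ) ≤ (R:ℤ) := by exact_mod_cast hR
    have hpos : (0:ℤ) ≤ (R:ℤ) ^ (K + 1) := by positivity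
    have hRK : (R:ℤ) ^ (K + 1) * 2 ≤ (R:ℤ) ^ (K + 1) * (R:ℤ) :=
      mul_le_mul_of_nonneg_left h2R hpos
    have hps : (R:ℤ) ^ (K + 1 + 1) = (R:ℤ) ^ (K + 1) * (R:ℤ) := pow_succ _ _
    linarith
  
lemma S_nonneg (R : ℕ) (hR : 1 ≤ R) {N : ℕ} (hN : N ≠ 0) : 0 ≤ S R N := by
  rcases eq_or_lt_of_le hR with h1 | hR2
  · -- R = 1
    have : S R N = ∑ g ∈ N.divisors, (μ g : ℤ) := by
      rw [S]
      apply Finset.sum_congr rfl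
      intro g _
      rw [← h1]
      simp
    rw [this]
    have hz : ∑ g ∈ N.divisors, (μ g : ℤ) = if N = 1 then 1 else 0 := by
      have hmz : (μ * ζ : ArithmeticFunction ℤ) N = ∑ x ∈ N.divisorsAntidiagonal, (μ x.1 : ℤ) := by
        rw [mul_apply]
        apply Finset.sum_congr rfl
        intro x hx
        have hx2 : x.2 ≠ 0 := Nat.right_ne_zero_of_mem_divisorsAntidiagonal hx
        simp [natCoe_apply, zeta_apply, hx2]
      rw [← Nat.sum_divisorsAntidiagonal (fun a _b => (μ a : ℤ)), ← hmz,
        moebius_mul_coe_zeta, one_apply]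
    rw [hz]
    split <;> norm_num
  · -- R ≥ 2
    rcases eq_or_ne N 1 with rfl | hN1
    · simp [S]
    have h2R : (2 : ℤ) ≤ (R : ℤ) := by exact_mod_cast hR2
    have h1mem : 1 ∈ N.divisors := Nat.one_mem_divisors.mpr hN
    have hsplit : S R N = (R : ℤ) ^ N + ∑ g ∈ N.divisors.erase 1, (μ g : ℤ) * (R:ℤ) ^ (N / g) := by
      rw [S, ← Finset.add_sum_erase _ _ h1mem]
      simp
    -- bound each term below
    have hterm : ∀ g ∈ N.divisors.erase 1, -((R:ℤ) ^ (N / g)) ≤ (μ g : ℤ) * (R:ℤ) ^ (N / g) := by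
      intro g hg
      have h1 : (-1 : ℤ) ≤ (μ g : ℤ) := neg_le_of_abs_le abs_moebius_le_one
      have h2 : (0:ℤ) ≤ (R:ℤ) ^ (N / g) := by positivity
      nlinarith
    have hsum1 : -(∑ g ∈ N.divisors.erase 1, (R:ℤ) ^ (N / g))
        ≤ ∑ g ∈ N.divisors.erase 1, (μ g : ℤ) * (R:ℤ) ^ (N / g) := by
      rw [← Finset.sum_neg_distrib]
      exact Finset.sum_le_sum hterm
    -- the image bound
    have himg : ∑ g ∈ N.divisors.erase 1, (R:ℤ) ^ (N / g)
        = ∑ d ∈ (N.divisors.erase 1).image (N / ·), (R:ℤ) ^ d := by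
      rw [Finset.sum_image]
      intro x hx y hy hxy
      have hx' : x ∣ N := (Nat.mem_divisors.mp (Finset.mem_of_mem_erase hx)).1
      have hy' : y ∣ N := (Nat.mem_divisors.mp (Finset.mem_of_mem_erase hy)).1
      rw [← Nat.div_div_self hx' hN, ← Nat.div_div_self hy' hN, (by exact hxy : N / x = N / y)]
    have hsub2 : (N.divisors.erase 1).image (N / ·) ⊆ Icc 1 (N / 2) := by
      intro d hd
      obtain ⟨g, hg, rfl⟩ := Finset.mem_image.mp hd
      have hg1 : g ≠ 1 := Finset.ne_of_mem_erase hg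
      have hgd : g ∣ N := (Nat.mem_divisors.mp (Finset.mem_of_mem_erase hg)).1
      have hg2 : 2 ≤ g := by
        rcases g with _ | _ | g
        · exact absurd (zero_dvd_iff.mp hgd) hN
        · exact absurd rfl hg1
        · omega
      rw [Finset.mem_Icc]
      constructor
      · exact Nat.one_le_div_iff (by omega) |>.mpr (Nat.le_of_dvd (Nat.pos_of_ne_zero hN) hgd)
      · exact Nat.div_le_div_left hg2 (by omega)
    have hsum2 : ∑ d ∈ (N.divisors.erase 1).image (N / ·), (R:ℤ) ^ d
        ≤ ∑ d ∈ Icc 1 (N / 2), (R:ℤ) ^ d := by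
      apply Finset.sum_le_sum_of_subset_of_nonneg hsub2
      intro i _ _
      positivity
    have hgeo := geo_sum_lt R (by omega) (N / 2)
    have hle : (R:ℤ) ^ (N / 2 + 1) ≤ (R:ℤ) ^ N := by
      apply pow_le_pow_right₀ (by omega)
      omega
    omega

def Mn (R N : ℕ) : ℕ := (S R N / N).toNat

lemma Mn_spec (R : ℕ) (hR : 1 ≤ R) {N : ℕ} (hN : N ≠ 0) :
    (N : ℤ) * (Mn R N : ℤ) = S R N := by
  have hdvd := dvd_S R (N := N) hN
  have hnn := S_nonneg R hR hN
  have hq : (0:ℤ) ≤ S R N / N := Int.ediv_nonneg hnn (by positivity)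
  rw [Mn, Int.toNat_of_nonneg hq, Int.mul_ediv_cancel' hdvd]

lemma sum_divisors_Mn (R : ℕ) (hR : 1 ≤ R) {k : ℕ} (hk : k ≠ 0) :
    ∑ N ∈ k.divisors, (N : ℤ) * (Mn R N : ℤ) = (R : ℤ) ^ k := by
  revert hk
  have := (sum_eq_iff_sum_mul_moebius_eq
    (f := fun i => (i : ℤ) * (Mn R i : ℤ)) (g := fun k => (R : ℤ) ^ k)).mpr
  intro hk
  apply this _ k (Nat.pos_of_ne_zero hk)
  intro n hn
  simp only [Int.cast_id]
  rw [Nat.sum_divisorsAntidiagonal (fun a b => (μ a : ℤ) * (R:ℤ) ^ b)]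
  exact (Mn_spec R hR (by omega)).symm



noncomputable def G (N : ℕ) : PowerSeries ℤ := PowerSeries.mk fun k => if N ∣ k then 1 else 0

lemma G_inv {N : ℕ} (hN : N ≠ 0) : (1 - X ^ N) * G N = (1 : PowerSeries ℤ) := by
  ext k
  rw [sub_mul, one_mul, map_sub, coeff_X_pow_mul']
  simp only [G, coeff_mk, coeff_one]
  rcases Nat.eq_zero_or_pos k with rfl | hk
  · simp [Nat.le_zero, hN]
  · have hk0 : ¬ k = 0 := by omega
    by_cases hNk : N ≤ k
    · have hdvd : N ∣ k - N ↔ N ∣ k := by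
        constructor
        · intro h
          have hkk : k = (k - N) + N := by omega
          rw [hkk]
          exact Nat.dvd_add h dvd_rfl
        · intro h
          exact Nat.dvd_sub h dvd_rfl
      by_cases hd : N ∣ k
      · simp [hNk, hd, hdvd, hk0]
      · simp [hNk, hd, hdvd, hk0]
    · have hd : ¬ N ∣ k := fun h => hNk (Nat.le_of_dvd hk h)
      simp [hNk, hd, hk0]

lemma coeff_XG (N i : ℕ) :
    coeff i (X ^ N * G N) = if N ≤ i ∧ N ∣ i then 1 else 0 := by
  rw [coeff_X_pow_mul']
  by_cases hNi : N ≤ i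
  · rw [if_pos hNi]
    simp only [G, coeff_mk]
    have hdvd : N ∣ i - N ↔ N ∣ i := by
      constructor
      · intro h
        have hii : i = (i - N) + N := by omega
        rw [hii]
        exact Nat.dvd_add h dvd_rfl
      · intro h
        exact Nat.dvd_sub h dvd_rfl
    by_cases h : N ∣ i
    · rw [if_pos (hdvd.mpr h), if_pos ⟨hNi, h⟩]
    · rw [if_neg (fun hc => h (hdvd.mp hc)), if_neg (fun hc => h hc.2)]
  · rw [if_neg hNi, if_neg (fun hc => hNi hc.1)]

lemma single (a m : ℕ) (ha : a ≠ 0) :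
    X * (d⁄dX ℤ) ((1 - X ^ a) ^ m) =
      -(C ((m : ℤ) * a) * (X ^ a * G a)) * (1 - X ^ a) ^ m := by
  rcases m with _ | m
  · simp
  · have hD2 : d⁄dX ℤ (1 - X ^ a : PowerSeries ℤ) = -((a : PowerSeries ℤ) * X ^ (a - 1)) := by
      rw [map_sub, Derivation.map_one_eq_zero, Derivation.leibniz_pow, derivative_X]
      simp [smul_eq_mul, nsmul_eq_mul]
    have hD := Derivation.leibniz_pow (D := d⁄dX ℤ) (a := (1 - X ^ a : PowerSeries ℤ)) (m + 1)
    simp only [Nat.add_sub_cancel] at hD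
    rw [hD, hD2, pow_succ]
    simp only [smul_eq_mul, nsmul_eq_mul, map_mul, map_natCast]
    have hXa : (X : PowerSeries ℤ) * X ^ (a - 1) = X ^ a := by
      rw [← pow_succ']
      congr 1
      omega
    have hg : G a * (1 - X ^ a) = 1 := by rw [mul_comm]; exact G_inv ha
    push_cast
    linear_combination (-(((m : PowerSeries ℤ) + 1) * (a : PowerSeries ℤ) * (1 - X ^ a) ^ m)) * hXa
      + (((m : PowerSeries ℤ) + 1) * (a : PowerSeries ℤ) * X ^ a * (1 - X ^ a) ^ m) * hg

lemma logderiv_prod (s : Finset ℕ) (hs : ∀ N ∈ s, N ≠ 0) (m : ℕ → ℕ) :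
    X * (d⁄dX ℤ) (∏ N ∈ s, (1 - X ^ N) ^ m N) =
      -(∑ N ∈ s, C ((m N : ℤ) * N) * (X ^ N * G N)) * ∏ N ∈ s, (1 - X ^ N) ^ m N := by
  classical
  induction s using Finset.induction_on with
  | empty => simp
  | insert _ _ ha ih =>
    rename_i a s
    rw [Finset.prod_insert ha, Finset.sum_insert ha, Derivation.leibniz]
    have ih' := ih (fun N hN => hs N (Finset.mem_insert_of_mem hN))
    have hsingle := single a (m a) (hs a (Finset.mem_insert_self a s))
    simp only [smul_eq_mul]
    linear_combination ((1 - X ^ a) ^ m a) * ih' + (∏ N ∈ s, (1 - X ^ N) ^ m N) * hsingle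


lemma coeff_H (R n : ℕ) (M : ℕ → ℕ)
    (hM : ∀ k : ℕ, k ≠ 0 → k ≤ n → ∑ N ∈ k.divisors, (N : ℤ) * (M N : ℤ) = (R : ℤ) ^ k)
    (i : ℕ) (hi1 : 1 ≤ i) (hin : i ≤ n) :
    coeff i (∑ N ∈ Icc 1 n, C ((M N : ℤ) * N) * (X ^ N * G N)) = (R : ℤ) ^ i := by
  rw [map_sum]
  have hterm : ∀ N ∈ Icc 1 n, coeff i (C ((M N : ℤ) * N) * (X ^ N * G N))
      = if N ∈ i.divisors then (M N : ℤ) * N else 0 := by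
    intro N hN
    rw [coeff_C_mul, coeff_XG]
    have hiff : (N ≤ i ∧ N ∣ i) ↔ N ∈ i.divisors := by
      rw [Nat.mem_divisors]
      constructor
      · rintro ⟨-, h⟩; exact ⟨h, by omega⟩
      · rintro ⟨h, -⟩; exact ⟨Nat.le_of_dvd (by omega) h, h⟩
    by_cases h : N ∈ i.divisors
    · rw [if_pos (hiff.mpr h), if_pos h, mul_one]
    · rw [if_neg (fun hc => h (hiff.mp hc)), if_neg h, mul_zero]
  rw [Finset.sum_congr rfl hterm, Finset.sum_ite_mem]
  have hsub : Icc 1 n ∩ i.divisors = i.divisors := by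
    apply Finset.inter_eq_right.mpr
    intro N hN
    obtain ⟨hd, -⟩ := Nat.mem_divisors.mp hN
    rw [Finset.mem_Icc]
    have h1 : 1 ≤ N := Nat.pos_of_mem_divisors hN
    have h2 : N ≤ i := Nat.le_of_dvd (by omega) hd
    omega
  rw [hsub, ← hM i (by omega) hin]
  apply Finset.sum_congr rfl
  intro N _
  ring

lemma coeff_H0 (n : ℕ) (M : ℕ → ℕ) :
    coeff 0 (∑ N ∈ Icc 1 n, C ((M N : ℤ) * N) * (X ^ N * G N)) = 0 := by
  rw [map_sum]
  apply Finset.sum_eq_zero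
  intro N hN
  have h1 : 1 ≤ N := (Finset.mem_Icc.mp hN).1
  rw [coeff_C_mul, coeff_XG, if_neg (by omega), mul_zero]

lemma coeff_prod_aux (R n : ℕ) (M : ℕ → ℕ)
    (hM : ∀ k : ℕ, k ≠ 0 → k ≤ n → ∑ N ∈ k.divisors, (N : ℤ) * (M N : ℤ) = (R : ℤ) ^ k) :
    ∀ k, k ≤ n → coeff k (∏ N ∈ Icc 1 n, (1 - X ^ N) ^ M N)
      = if k = 0 then 1 else if k = 1 then -(R : ℤ) else 0 := by
  set f : PowerSeries ℤ := ∏ N ∈ Icc 1 n, (1 - X ^ N) ^ M N with hf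
  set Hs : PowerSeries ℤ := ∑ N ∈ Icc 1 n, C ((M N : ℤ) * N) * (X ^ N * G N) with hHs
  have h0 : coeff 0 f = 1 := by
    rw [hf, coeff_zero_eq_constantCoeff, map_prod]
    apply Finset.prod_eq_one
    intro N hN
    have hN1 : N ≠ 0 := by have := (Finset.mem_Icc.mp hN).1; omega
    rw [map_pow, map_sub, map_one, map_pow, constantCoeff_X, zero_pow hN1, sub_zero, one_pow]
  have hkey := logderiv_prod (Icc 1 n) (fun N hN => by have := (Finset.mem_Icc.mp hN).1; omega) M
  rw [← hf, ← hHs, neg_mul] at hkey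
  have hrec : ∀ j : ℕ, (((j + 1 : ℕ)) : ℤ) * coeff (j + 1) f
      = -∑ i ∈ range (j + 2), coeff i Hs * coeff (j + 1 - i) f := by
    intro j
    have h := congrArg (coeff (j + 1)) hkey
    rw [coeff_succ_X_mul, coeff_derivative, map_neg, coeff_mul,
      Finset.Nat.sum_antidiagonal_eq_sum_range_succ_mk] at h
    push_cast at h ⊢
    linarith [h]
  intro k
  induction k using Nat.strong_induction_on with
  | _ k ih =>
  intro hk
  rcases k with _ | j
  · simpa using h0
  rcases j with _ | j
  · -- k = 1
    have h := hrec 0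
    rw [Finset.sum_range_succ, Finset.sum_range_succ, Finset.sum_range_zero,
      coeff_H0 n M, coeff_H R n M hM 1 le_rfl (by omega)] at h
    simp only [Nat.sub_self] at h
    rw [h0] at h
    norm_num at h
    simpa using h
  · -- k = j + 2
    have hj2n : j + 2 ≤ n := hk
    have h := hrec (j + 1)
    rw [Finset.sum_range_succ, Finset.sum_range_succ] at h
    have hzero : ∑ i ∈ range (j + 1), coeff i Hs * coeff (j + 2 - i) f = 0 := by
      apply Finset.sum_eq_zero
      intro i hi
      have hi' : i ≤ j := by have := Finset.mem_range.mp hi; omega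
      rcases Nat.eq_zero_or_pos i with rfl | hipos
      · rw [coeff_H0 n M, zero_mul]
      · have hfz : coeff (j + 2 - i) f = 0 := by
          rw [ih (j + 2 - i) (by omega) (by omega)]
          rw [if_neg (by omega), if_neg (by omega)]
        rw [hfz, mul_zero]
    have hf1 : coeff (j + 2 - (j + 1)) f = -(R : ℤ) := by
      have : j + 2 - (j + 1) = 1 := by omega
      rw [this, ih 1 (by omega) (by omega)]
      norm_num
    have hf0 : coeff (j + 2 - (j + 2)) f = 1 := by
      have : j + 2 - (j + 2) = 0 := by omega
      rw [this, h0]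
    rw [hzero, hf1, hf0, coeff_H R n M hM (j + 1) (by omega) (by omega),
      coeff_H R n M hM (j + 2) (by omega) (by omega)] at h
    have hsum : (R : ℤ) ^ (j + 1) * -(R : ℤ) + (R : ℤ) ^ (j + 2) * 1 = 0 := by
      rw [pow_succ (R : ℤ) (j + 1)]
      ring
    rw [if_neg (by omega), if_neg (by omega)]
    have hk0 : ((j + 2 : ℕ) : ℤ) ≠ 0 := by positivity
    have : ((j + 2 : ℕ) : ℤ) * coeff (j + 2) f = 0 := by
      push_cast at h ⊢
      linarith [h, hsum]
    exact (mul_eq_zero.mp this).resolve_left hk0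

end WittAux

/-- Proposition 1.1, the Witt identity: for `R ≥ 1` the necklace
numbers `M(N;R) = (1/N)·Σ_{g ∣ N} μ(g)·R^{N/g}` are nonnegative integers, and
`∏_{N≥1} (1−X^N)^{M(N;R)} = 1 − R·X` holds coefficientwise in `ℤ⟦X⟧`. -/
theorem witt_identity (R : ℕ) (hR : 1 ≤ R) :
    ∃ M : ℕ → ℕ,
      (∀ N : ℕ, 1 ≤ N →
        (N : ℤ) * (M N : ℤ) = ∑ g ∈ N.divisors, (moebius g : ℤ) * (R : ℤ) ^ (N / g))
      ∧ ∀ n : ℕ,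
          PowerSeries.coeff n (∏ N ∈ Finset.Icc 1 n, (1 - PowerSeries.X ^ N) ^ M N)
            = PowerSeries.coeff n (1 - PowerSeries.C (R : ℤ) * PowerSeries.X) := by
  refine ⟨WittAux.Mn R, fun N hN => ?_, fun n => ?_⟩
  · rw [WittAux.Mn_spec R hR (by omega), WittAux.S]
  · have hcoeff := WittAux.coeff_prod_aux R n (WittAux.Mn R)
      (fun k hk _ => WittAux.sum_divisors_Mn R hR hk) n le_rfl
    rw [hcoeff, map_sub, coeff_one, coeff_C_mul, coeff_X]
    rcases n with _ | _ | n <;> norm_num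
end
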